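/- arXiv:2108.06605 — 5 statements merged into one kernel-verified Lean document; each statement's English description precedes it below -/
import Mathlib

section
/- Let β ∈ ℝ^p and let s < p be a positive integer. If β↓_s = 0 or β↓_s > β↓_{s+1}, then the Euclidean projection Π_{Σ_s^p}(β) consists of exactly one vector u, given by u_i = β_i whenever |β_i| ≥ β↓_s and u_i = 0 whenever |β_i| < β↓_s. -/
open Matrix Filter Topology Finset
open scoped RealInnerProductSpace

section HTaux

lemma HT_sorted_countP_ge (l : List ℝ) (hl : l.Pairwise (· ≤ ·)) (k : ℕ) (hk : k < l.length) :
    l.length - k ≤ l.countP (fun x => decide (l[k] ≤ x)) := by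
  have h1 : l.countP (fun x => decide (l[k] ≤ x)) =
      (l.take k).countP (fun x => decide (l[k] ≤ x)) +
      (l.drop k).countP (fun x => decide (l[k] ≤ x)) := by
    rw [← List.countP_append, List.take_append_drop]
  have h2 : (l.drop k).countP (fun x => decide (l[k] ≤ x)) = (l.drop k).length := by
    rw [List.countP_eq_length]
    intro x hx
    obtain ⟨j, hj, rfl⟩ := List.getElem_of_mem hx
    rw [List.getElem_drop]
    simp only [decide_eq_true_eq]
    exact hl.rel_get_of_le (by simp [Fin.le_def])
  rw [h1, h2, List.length_drop]
  omega

lemma HT_sorted_countP_le (l : List ℝ) (hl : l.Pairwise (· ≤ ·)) (k : ℕ) (hk : k < l.length)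
    (hk0 : 0 < k) (hgap : l[k-1]'(by omega) < l[k]) :
    l.countP (fun x => decide (l[k] ≤ x)) ≤ l.length - k := by
  have h1 : l.countP (fun x => decide (l[k] ≤ x)) =
      (l.take k).countP (fun x => decide (l[k] ≤ x)) +
      (l.drop k).countP (fun x => decide (l[k] ≤ x)) := by
    rw [← List.countP_append, List.take_append_drop]
  have h2 : (l.take k).countP (fun x => decide (l[k] ≤ x)) = 0 := by
    rw [List.countP_eq_zero]
    intro x hx
    obtain ⟨j, hj, rfl⟩ := List.getElem_of_mem hx
    rw [List.getElem_take]
    have hjk : j < k := by simp at hj; exact hj.1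
    have : l[j]'(by omega) ≤ l[k-1]'(by omega) :=
      hl.rel_get_of_le (a := ⟨j, by omega⟩) (b := ⟨k-1, by omega⟩) (by simp [Fin.le_def]; omega)
    simp only [decide_eq_true_eq, not_le]
    exact lt_of_le_of_lt this hgap
  calc l.countP _ = _ + _ := h1
    _ ≤ 0 + (l.drop k).length := by rw [h2]; exact Nat.add_le_add_left List.countP_le_length _
    _ = l.length - k := by rw [List.length_drop]; omega

lemma HT_sorted_countP_lt_le (l : List ℝ) (hl : l.Pairwise (· ≤ ·)) (k : ℕ) (hk : k < l.length) :
    l.countP (fun x => decide (l[k] < x)) ≤ l.length - (k + 1) := by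
  have h1 : l.countP (fun x => decide (l[k] < x)) =
      (l.take (k+1)).countP (fun x => decide (l[k] < x)) +
      (l.drop (k+1)).countP (fun x => decide (l[k] < x)) := by
    rw [← List.countP_append, List.take_append_drop]
  have h2 : (l.take (k+1)).countP (fun x => decide (l[k] < x)) = 0 := by
    rw [List.countP_eq_zero]
    intro x hx
    obtain ⟨j, hj, rfl⟩ := List.getElem_of_mem hx
    rw [List.getElem_take]
    have hjk : j ≤ k := by simp at hj; omega
    have : l[j]'(by omega) ≤ l[k] := hl.rel_get_of_le (by simpa [Fin.le_def] using hjk)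
    simp only [decide_eq_true_eq, not_lt]
    exact this
  calc l.countP _ = _ + _ := h1
    _ ≤ 0 + (l.drop (k+1)).length := by
        rw [h2]; exact Nat.add_le_add_left List.countP_le_length _
    _ ≤ l.length - (k+1) := by rw [List.length_drop]; omega

lemma HT_count_transfer {p : ℕ} (β : EuclideanSpace ℝ (Fin p)) (P : ℝ → Prop) [DecidablePred P] :
    ((Finset.univ.val.map fun i => |β i|).sort (· ≤ ·)).countP (fun x => decide (P x)) =
    (univ.filter fun i => P |β i|).card := by
  have h1 : (((Finset.univ.val.map fun i => |β i|).sort (· ≤ ·) : List ℝ) : Multiset ℝ)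
      = Finset.univ.val.map fun i => |β i| := Multiset.sort_eq _ _
  have := Multiset.coe_countP (p := P) ((Finset.univ.val.map fun i => |β i|).sort (· ≤ ·))
  rw [← this, h1, Multiset.countP_map]
  rfl

end HTaux

noncomputable section SCL

/-- the zero "norm" of a vector: the number of its nonzero entries. -/
def zeroNorm {p : ℕ} (x : EuclideanSpace ℝ (Fin p)) : ℕ :=
  {i | x i ≠ 0}.ncard

/-- the `k`-th largest entry in magnitude (`1`-indexed; junk value `0` if `k = 0` or `k > p`). -/
def kthLargestAbs {p : ℕ} (x : EuclideanSpace ℝ (Fin p)) (k : ℕ) : ℝ :=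
  ((Finset.univ.val.map fun i => |x i|).sort (· ≤ ·)).getD (p - k) 0

/-- the (set-valued) Euclidean projection onto a set `S`. -/
def projSet {m : ℕ} (S : Set (EuclideanSpace ℝ (Fin m))) (w : EuclideanSpace ℝ (Fin m)) :
    Set (EuclideanSpace ℝ (Fin m)) :=
  {u | u ∈ S ∧ ∀ v ∈ S, ‖u - w‖ ≤ ‖v - w‖}

/-- the first block `β₁` of `β = (β₁; β₂)`. -/
def part1 {p₁ p₂ : ℕ} (β : EuclideanSpace ℝ (Fin (p₁ + p₂))) : EuclideanSpace ℝ (Fin p₁) :=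
  WithLp.toLp 2 (fun i => β (Fin.castAdd p₂ i))

/-- the second block `β₂` of `β = (β₁; β₂)`. -/
def part2 {p₁ p₂ : ℕ} (β : EuclideanSpace ℝ (Fin (p₁ + p₂))) : EuclideanSpace ℝ (Fin p₂) :=
  WithLp.toLp 2 (fun i => β (Fin.natAdd p₁ i))

/-- the logistic loss `ℓ_log(β; X, y)`. -/
def ellLog {n p : ℕ} (X : Matrix (Fin n) (Fin p) ℝ) (y : Fin n → ℝ)
    (β : EuclideanSpace ℝ (Fin p)) : ℝ :=
  ∑ i, (Real.log (1 + Real.exp (X.mulVec β i)) - y i * X.mulVec β i)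

/-- the linear regression loss `ℓ_lin(β; X, y)`. -/
def ellLin {n p : ℕ} (X : Matrix (Fin n) (Fin p) ℝ) (y : Fin n → ℝ)
    (β : EuclideanSpace ℝ (Fin p)) : ℝ :=
  (1 / 2) * ∑ i, (y i - X.mulVec β i) ^ 2

/-- the SCL objective `f(β₁,β₂) = (1/n) (a ℓ₁(β₁;X,y) + b ℓ₂(β₂;Z,y) + (c/2)‖Xβ₁ − Zβ₂‖²)`,
as a function of the merged vector `β = (β₁; β₂)`. -/
def sclObj {n p₁ p₂ : ℕ}
    (ℓ₁ : Matrix (Fin n) (Fin p₁) ℝ → (Fin n → ℝ) → EuclideanSpace ℝ (Fin p₁) → ℝ)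
    (ℓ₂ : Matrix (Fin n) (Fin p₂) ℝ → (Fin n → ℝ) → EuclideanSpace ℝ (Fin p₂) → ℝ)
    (X : Matrix (Fin n) (Fin p₁) ℝ) (Z : Matrix (Fin n) (Fin p₂) ℝ) (y : Fin n → ℝ)
    (a b c : ℝ) (β : EuclideanSpace ℝ (Fin (p₁ + p₂))) : ℝ :=
  (1 / (n : ℝ)) * (a * ℓ₁ X y (part1 β) + b * ℓ₂ Z y (part2 β)
    + (c / 2) * ∑ i, (X.mulVec (part1 β) i - Z.mulVec (part2 β) i) ^ 2)

/-- the largest eigenvalue of a symmetric matrix, via the Rayleigh quotient. -/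
def lambdaMax {ι : Type*} [Fintype ι] (M : Matrix ι ι ℝ) : ℝ :=
  sSup {r | ∃ v : EuclideanSpace ℝ ι, ‖v‖ = 1 ∧ r = ∑ i, v i * M.mulVec v i}

/-- the smallest eigenvalue of a symmetric matrix, via the Rayleigh quotient. -/
def lambdaMin {ι : Type*} [Fintype ι] (M : Matrix ι ι ℝ) : ℝ :=
  sInf {r | ∃ v : EuclideanSpace ℝ ι, ‖v‖ = 1 ∧ r = ∑ i, v i * M.mulVec v i}

/-- the 2×2 block matrix `[[A, B], [C, D]]`, indexed by `Fin (p₁ + p₂)`. -/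
def blockMat {p₁ p₂ : ℕ} (A : Matrix (Fin p₁) (Fin p₁) ℝ) (B : Matrix (Fin p₁) (Fin p₂) ℝ)
    (C : Matrix (Fin p₂) (Fin p₁) ℝ) (D : Matrix (Fin p₂) (Fin p₂) ℝ) :
    Matrix (Fin (p₁ + p₂)) (Fin (p₁ + p₂)) ℝ :=
  Matrix.reindex finSumFinEquiv finSumFinEquiv (Matrix.fromBlocks A B C D)

/-- a square matrix as a continuous linear map on Euclidean space. -/
def matCLM {ι : Type*} [Fintype ι] [DecidableEq ι] (M : Matrix ι ι ℝ) :
    EuclideanSpace ℝ ι →L[ℝ] EuclideanSpace ℝ ι :=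
  LinearMap.toContinuousLinearMap (Matrix.toEuclideanLin M)

/-- `A` is `s`-regular if any `s` of its columns are linearly independent. -/
def sRegular {n p : ℕ} (A : Matrix (Fin n) (Fin p) ℝ) (s : ℕ) : Prop :=
  ∀ T : Finset (Fin p), T.card = s →
    LinearIndependent ℝ (fun j : {x // x ∈ T} => Aᵀ j.1)

/-- the feasible set `Σ = Σ_{s₁}^{p₁} × Σ_{s₂}^{p₂}` of the SCL problem, in merged form. -/
def feas (p₁ p₂ s₁ s₂ : ℕ) : Set (EuclideanSpace ℝ (Fin (p₁ + p₂))) :=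
  {β | zeroNorm (part1 β) ≤ s₁ ∧ zeroNorm (part2 β) ≤ s₂}

/-- `β` is an `α`-stationary point of the SCL problem with objective `f`. -/
def alphaStat {p₁ p₂ : ℕ} (f : EuclideanSpace ℝ (Fin (p₁ + p₂)) → ℝ) (s₁ s₂ : ℕ) (α : ℝ)
    (β : EuclideanSpace ℝ (Fin (p₁ + p₂))) : Prop :=
  part1 β ∈ projSet {v | zeroNorm v ≤ s₁} (part1 β - α • part1 (gradient f β)) ∧
  part2 β ∈ projSet {v | zeroNorm v ≤ s₂} (part2 β - α • part2 (gradient f β))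

end SCL

set_option maxHeartbeats 1000000 in
/-- if `β↓_s = 0` or `β↓_s > β↓_{s+1}`, the Euclidean projection of `β` onto
`Σ_s^p` consists of exactly one vector `u`, with `u_i = β_i` when `|β_i| ≥ β↓_s` and
`u_i = 0` when `|β_i| < β↓_s`. -/
theorem hard_thresholding_projection_unique {p s : ℕ} (hs : 0 < s) (hsp : s < p)
    (β : EuclideanSpace ℝ (Fin p))
    (h : kthLargestAbs β s = 0 ∨ kthLargestAbs β (s + 1) < kthLargestAbs β s)
    (u : EuclideanSpace ℝ (Fin p))
    (hu : ∀ i, u i = if kthLargestAbs β s ≤ |β i| then β i else 0) :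
    projSet {v | zeroNorm v ≤ s} β = {u} := by
  classical
  set l : List ℝ := ((Finset.univ.val.map fun i => |β i|).sort (· ≤ ·)) with hldef
  have hlen : l.length = p := by rw [hldef, Multiset.length_sort]; simp
  have hsort : l.Pairwise (· ≤ ·) := Multiset.pairwise_sort _ _
  have hks : p - s < p := by omega
  have hτ : kthLargestAbs β s = l[p-s]'(by omega) := by
    rw [kthLargestAbs, List.getD_eq_getElem]
  have hnonneg : ∀ x ∈ l, (0:ℝ) ≤ x := by
    intro x hx
    rw [hldef, Multiset.mem_sort] at hx
    obtain ⟨i, _, rfl⟩ := Multiset.mem_map.mp hx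
    exact abs_nonneg _
  have hzn : ∀ v : EuclideanSpace ℝ (Fin p),
      zeroNorm v = (univ.filter fun i => v i ≠ 0).card := by
    intro v
    rw [zeroNorm, ← Set.ncard_coe_finset]
    congr 1
    ext i; simp
  have hFnn : ∀ v : EuclideanSpace ℝ (Fin p), (0:ℝ) ≤ ∑ i, (v i - β i)^2 :=
    fun v => Finset.sum_nonneg fun i _ => sq_nonneg _
  have hnorm : ∀ v : EuclideanSpace ℝ (Fin p),
      ‖v - β‖ = Real.sqrt (∑ i, (v i - β i)^2) := by
    intro v
    rw [EuclideanSpace.norm_eq]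
    congr 1
    refine Finset.sum_congr rfl fun i _ => ?_
    rw [PiLp.sub_apply, Real.norm_eq_abs, sq_abs]
  have hnormle : ∀ v w : EuclideanSpace ℝ (Fin p),
      (∑ i, (v i - β i)^2) ≤ (∑ i, (w i - β i)^2) → ‖v - β‖ ≤ ‖w - β‖ := by
    intro v w hvw
    rw [hnorm, hnorm]
    exact Real.sqrt_le_sqrt hvw
  have hnormle' : ∀ v w : EuclideanSpace ℝ (Fin p),
      ‖v - β‖ ≤ ‖w - β‖ → (∑ i, (v i - β i)^2) ≤ (∑ i, (w i - β i)^2) := by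
    intro v w hvw
    rw [hnorm, hnorm] at hvw
    calc (∑ i, (v i - β i)^2) = (Real.sqrt (∑ i, (v i - β i)^2))^2 :=
          (Real.sq_sqrt (hFnn v)).symm
      _ ≤ (Real.sqrt (∑ i, (w i - β i)^2))^2 := by
          apply pow_le_pow_left₀ (Real.sqrt_nonneg _) hvw
      _ = ∑ i, (w i - β i)^2 := Real.sq_sqrt (hFnn w)
  have hmem : ∀ v : EuclideanSpace ℝ (Fin p),
      v ∈ projSet {v | zeroNorm v ≤ s} β ↔
        zeroNorm v ≤ s ∧ ∀ w : EuclideanSpace ℝ (Fin p), zeroNorm w ≤ s → ‖v - β‖ ≤ ‖w - β‖ := by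
    intro v; simp [projSet]
  rcases h with hτ0 | hgap
  · -- τ = 0 case
    have hub : u = β := by
      ext i
      rw [hu i, if_pos (hτ0 ▸ abs_nonneg (β i))]
    have hβfeas : zeroNorm β ≤ s := by
      rw [hzn]
      have heq : (univ.filter fun i => β i ≠ 0) =
          (univ.filter fun i => l[p-s]'(by omega) < |β i|) := by
        ext i
        simp only [mem_filter, mem_univ, true_and]
        rw [← hτ, hτ0]
        constructor
        · intro hi; exact abs_pos.mpr hi
        · intro hi; exact abs_pos.mp hi
      rw [heq, ← HT_count_transfer β (fun x => l[p-s]'(by omega) < x), ← hldef]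
      have := HT_sorted_countP_lt_le l hsort (p-s) (by omega)
      omega
    ext v
    rw [hmem, Set.mem_singleton_iff, hub]
    constructor
    · rintro ⟨hv1, hv2⟩
      have := hv2 β hβfeas
      rw [sub_self, norm_zero] at this
      have : v - β = 0 := norm_le_zero_iff.mp this
      exact sub_eq_zero.mp this
    · rintro rfl
      exact ⟨hβfeas, fun w hw => by rw [sub_self, norm_zero]; exact norm_nonneg _⟩
  · -- gap case
    have hτ1 : kthLargestAbs β (s+1) = l[p - (s+1)]'(by omega) := by
      rw [kthLargestAbs, List.getD_eq_getElem]
    have hidx : l[p - (s+1)]'(by omega) = l[p-s-1]'(by omega) := by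
      congr 1 <;> omega
    rw [hidx] at hτ1
    set τ := kthLargestAbs β s with hτdef
    have hgap' : l[p-s-1]'(by omega) < l[p-s]'(by omega) := by
      rw [← hτ1, ← hτ]; exact hgap
    have hτpos : 0 < τ := by
      rw [hτ]
      exact lt_of_le_of_lt (hnonneg _ (List.getElem_mem _)) hgap'
    set S : Finset (Fin p) := univ.filter fun i => τ ≤ |β i| with hSdef
    have hScard : S.card = s := by
      have h1 := HT_sorted_countP_ge l hsort (p-s) (by omega)
      have h2 := HT_sorted_countP_le l hsort (p-s) (by omega) (by omega) hgap'
      have h3 := HT_count_transfer β (fun x => l[p-s]'(by omega) ≤ x)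
      rw [← hldef] at h3
      have hSS : S = univ.filter fun i => l[p-s]'(by omega) ≤ |β i| := by
        rw [hSdef]; congr 1; funext i; rw [hτ]
      rw [hSS, ← h3]
      omega
    have hSmem : ∀ i, i ∈ S ↔ τ ≤ |β i| := by intro i; simp [hSdef]
    have huS : ∀ i ∈ S, u i = β i := by
      intro i hi; rw [hu i, if_pos ((hSmem i).mp hi)]
    have huSc : ∀ i ∉ S, u i = 0 := by
      intro i hi; rw [hu i, if_neg (fun hc => hi ((hSmem i).mpr hc))]
    have hufeas : zeroNorm u ≤ s := by
      rw [hzn]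
      calc (univ.filter fun i => u i ≠ 0).card ≤ S.card := by
            apply card_le_card
            intro i hi
            rw [mem_filter] at hi
            by_contra hc
            exact hi.2 (huSc i hc)
        _ = s := hScard
    -- F u computation
    have hFu : (∑ i, (u i - β i)^2) = ∑ i ∈ Sᶜ, (β i)^2 := by
      rw [← Finset.sum_add_sum_compl S]
      have h1 : ∑ i ∈ S, (u i - β i)^2 = 0 :=
        Finset.sum_eq_zero fun i hi => by rw [huS i hi, sub_self]; ring
      have h2 : ∑ i ∈ Sᶜ, (u i - β i)^2 = ∑ i ∈ Sᶜ, (β i)^2 :=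
        Finset.sum_congr rfl fun i hi => by
          rw [huSc i (Finset.mem_compl.mp hi), zero_sub, neg_sq]
      rw [h1, h2, zero_add]
    -- for general v: the decomposition
    have hkey : ∀ v : EuclideanSpace ℝ (Fin p), zeroNorm v ≤ s →
        (∑ i, (v i - β i)^2) - (∑ i, (u i - β i)^2) =
          (∑ i ∈ univ.filter (fun i => v i ≠ 0), (v i - β i)^2)
          + ((∑ i ∈ S \ univ.filter (fun i => v i ≠ 0), (β i)^2)
             - (∑ i ∈ (univ.filter (fun i => v i ≠ 0)) \ S, (β i)^2)) := by
      intro v hv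
      set Γ : Finset (Fin p) := univ.filter (fun i => v i ≠ 0) with hΓdef
      have hFv : (∑ i, (v i - β i)^2) =
          (∑ i ∈ Γ, (v i - β i)^2) + ∑ i ∈ Γᶜ, (β i)^2 := by
        rw [← Finset.sum_add_sum_compl Γ]
        congr 1
        refine Finset.sum_congr rfl fun i hi => ?_
        have : v i = 0 := by
          by_contra hc
          exact (Finset.mem_compl.mp hi) (by simp [hΓdef, hc])
        rw [this, zero_sub, neg_sq]
      have hsplitΓ : (∑ i ∈ Γᶜ, (β i)^2) =
          (∑ i ∈ S \ Γ, (β i)^2) + ∑ i ∈ Sᶜ \ Γ, (β i)^2 := by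
        rw [← Finset.sum_union]
        · congr 1
          ext i
          simp only [Finset.mem_compl, Finset.mem_union, Finset.mem_sdiff, Finset.mem_compl]
          tauto
        · rw [Finset.disjoint_left]
          intro i hi1 hi2
          rw [Finset.mem_sdiff] at hi1 hi2
          exact (Finset.mem_compl.mp hi2.1) hi1.1
      have hsplitS : (∑ i ∈ Sᶜ, (β i)^2) =
          (∑ i ∈ Γ \ S, (β i)^2) + ∑ i ∈ Sᶜ \ Γ, (β i)^2 := by
        rw [← Finset.sum_union]
        · congr 1
          ext i
          simp only [Finset.mem_compl, Finset.mem_union, Finset.mem_sdiff, Finset.mem_compl]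
          tauto
        · rw [Finset.disjoint_left]
          intro i hi1 hi2
          rw [Finset.mem_sdiff] at hi1 hi2
          exact hi2.2 hi1.1
      rw [hFu, hFv, hsplitΓ, hsplitS]
      ring
    -- card inequality and sum comparison
    have hcardΓ : ∀ v : EuclideanSpace ℝ (Fin p), zeroNorm v ≤ s →
        ((univ.filter (fun i => v i ≠ 0)) \ S).card ≤ (S \ univ.filter (fun i => v i ≠ 0)).card := by
      intro v hv
      set Γ : Finset (Fin p) := univ.filter (fun i => v i ≠ 0) with hΓdef
      have h1 : (Γ \ S).card + (Γ ∩ S).card = Γ.card := Finset.card_sdiff_add_card_inter Γ S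
      have h2 : (S \ Γ).card + (S ∩ Γ).card = S.card := Finset.card_sdiff_add_card_inter S Γ
      have h3 : Γ ∩ S = S ∩ Γ := Finset.inter_comm _ _
      have h4 : Γ.card ≤ s := by rw [← hzn v]; exact hv
      rw [h3] at h1
      omega
    have hsum_le : ∀ v : EuclideanSpace ℝ (Fin p), zeroNorm v ≤ s →
        (∑ i ∈ (univ.filter (fun i => v i ≠ 0)) \ S, (β i)^2)
          ≤ ∑ i ∈ S \ univ.filter (fun i => v i ≠ 0), (β i)^2 := by
      intro v hv
      set Γ : Finset (Fin p) := univ.filter (fun i => v i ≠ 0) with hΓdef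
      calc (∑ i ∈ Γ \ S, (β i)^2) ≤ (Γ \ S).card • τ^2 := by
            apply Finset.sum_le_card_nsmul
            intro i hi
            have hiS : i ∉ S := (Finset.mem_sdiff.mp hi).2
            have : |β i| < τ := lt_of_not_ge fun hc => hiS ((hSmem i).mpr hc)
            calc (β i)^2 = |β i|^2 := (sq_abs _).symm
              _ ≤ τ^2 := by nlinarith [abs_nonneg (β i)]
        _ = ((Γ \ S).card : ℝ) * τ^2 := by rw [nsmul_eq_mul]
        _ ≤ ((S \ Γ).card : ℝ) * τ^2 := by
            apply mul_le_mul_of_nonneg_right _ (sq_nonneg τ)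
            exact Nat.cast_le.mpr (hcardΓ v hv)
        _ = (S \ Γ).card • τ^2 := by rw [nsmul_eq_mul]
        _ ≤ ∑ i ∈ S \ Γ, (β i)^2 := by
            apply Finset.card_nsmul_le_sum
            intro i hi
            have hiS : i ∈ S := (Finset.mem_sdiff.mp hi).1
            have : τ ≤ |β i| := (hSmem i).mp hiS
            calc τ^2 ≤ |β i|^2 := by nlinarith
              _ = (β i)^2 := sq_abs _
    have hsum_lt : ∀ v : EuclideanSpace ℝ (Fin p), zeroNorm v ≤ s →
        (S \ univ.filter (fun i => v i ≠ 0)).Nonempty →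
        (∑ i ∈ (univ.filter (fun i => v i ≠ 0)) \ S, (β i)^2)
          < ∑ i ∈ S \ univ.filter (fun i => v i ≠ 0), (β i)^2 := by
      intro v hv hne
      set Γ : Finset (Fin p) := univ.filter (fun i => v i ≠ 0) with hΓdef
      have hlb : ((S \ Γ).card : ℝ) * τ^2 ≤ ∑ i ∈ S \ Γ, (β i)^2 := by
        rw [← nsmul_eq_mul]
        apply Finset.card_nsmul_le_sum
        intro i hi
        have : τ ≤ |β i| := (hSmem i).mp (Finset.mem_sdiff.mp hi).1
        calc τ^2 ≤ |β i|^2 := by nlinarith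
          _ = (β i)^2 := sq_abs _
      have hcard1 : 1 ≤ (S \ Γ).card := Finset.card_pos.mpr hne
      by_cases hΓS : (Γ \ S).Nonempty
      · have hlt : ∀ i ∈ Γ \ S, (β i)^2 < τ^2 := by
          intro i hi
          have hiS : i ∉ S := (Finset.mem_sdiff.mp hi).2
          have habs : |β i| < τ := lt_of_not_ge fun hc => hiS ((hSmem i).mpr hc)
          calc (β i)^2 = |β i|^2 := (sq_abs _).symm
            _ < τ^2 := by nlinarith [abs_nonneg (β i)]
        have hub : (∑ i ∈ Γ \ S, (β i)^2) < ((Γ \ S).card : ℝ) * τ^2 := by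
          calc (∑ i ∈ Γ \ S, (β i)^2) < ∑ _i ∈ Γ \ S, τ^2 :=
                Finset.sum_lt_sum_of_nonempty hΓS hlt
            _ = ((Γ \ S).card : ℝ) * τ^2 := by rw [Finset.sum_const, nsmul_eq_mul]
        have hcc : ((Γ \ S).card : ℝ) ≤ ((S \ Γ).card : ℝ) := by
          exact Nat.cast_le.mpr (hcardΓ v hv)
        nlinarith [sq_nonneg τ]
      · rw [Finset.not_nonempty_iff_eq_empty] at hΓS
        rw [hΓS, Finset.sum_empty]
        have : (0:ℝ) < ((S \ Γ).card : ℝ) * τ^2 := by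
          apply mul_pos
          · exact_mod_cast hcard1
          · positivity
        linarith
    ext v
    rw [hmem, Set.mem_singleton_iff]
    constructor
    · rintro ⟨hv1, hv2⟩
      have hle : ‖v - β‖ ≤ ‖u - β‖ := hv2 u hufeas
      have hFle : (∑ i, (v i - β i)^2) ≤ (∑ i, (u i - β i)^2) := hnormle' v u hle
      have hk := hkey v hv1
      set Γ : Finset (Fin p) := univ.filter (fun i => v i ≠ 0) with hΓdef
      have hΓsum : (0:ℝ) ≤ ∑ i ∈ Γ, (v i - β i)^2 :=
        Finset.sum_nonneg fun i _ => sq_nonneg _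
      have hd : (∑ i ∈ Γ \ S, (β i)^2) ≤ ∑ i ∈ S \ Γ, (β i)^2 := hsum_le v hv1
      -- S \ Γ must be empty
      have hSΓ : S \ Γ = ∅ := by
        by_contra hc
        have hne : (S \ Γ).Nonempty := Finset.nonempty_iff_ne_empty.mpr hc
        have := hsum_lt v hv1 hne
        linarith
      have hSsubΓ : S ⊆ Γ := Finset.sdiff_eq_empty_iff_subset.mp hSΓ
      have hΓcard : Γ.card ≤ s := by rw [← hzn v]; exact hv1
      have hΓeqS : Γ = S :=
        (Finset.eq_of_subset_of_card_le hSsubΓ (le_trans hΓcard hScard.ge)).symm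
      have hΓzero : ∑ i ∈ Γ, (v i - β i)^2 = 0 := by
        rw [hSΓ, Finset.sum_empty] at hk
        have h0 : (∑ i ∈ Γ \ S, (β i)^2) = 0 := by
          rw [hΓeqS, Finset.sdiff_self, Finset.sum_empty]
        linarith
      have hvΓ : ∀ i ∈ Γ, v i = β i := by
        intro i hi
        have := (Finset.sum_eq_zero_iff_of_nonneg fun i _ => sq_nonneg (v i - β i)).mp hΓzero i hi
        have : v i - β i = 0 := by
          exact pow_eq_zero_iff (two_ne_zero) |>.mp this
        linarith
      ext i
      by_cases hiS : i ∈ S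
      · rw [huS i hiS, hvΓ i (hΓeqS ▸ hiS)]
      · have hiΓ : i ∉ Γ := fun hc => hiS (hΓeqS ▸ hc)
        have hvi : v i = 0 := by
          by_contra hc
          exact hiΓ (by simp [hΓdef, hc])
        rw [hvi, huSc i hiS]
    · rintro rfl
      refine ⟨hufeas, fun w hw => ?_⟩
      apply hnormle
      have hk := hkey w hw
      have hd := hsum_le w hw
      have hΓsum : (0:ℝ) ≤ ∑ i ∈ univ.filter (fun i => w i ≠ 0), (w i - β i)^2 :=
        Finset.sum_nonneg fun i _ => sq_nonneg _
      linarith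
end

section
/- Let ℓ ∈ {ℓ_log, ℓ_lin}, let f be the SCL objective, and let β* = (β₁*; β₂*) satisfy ‖β₁*‖₀ ≤ s₁ and ‖β₂*‖₀ ≤ s₂. Then β* is a local minimizer of the SCL problem if and only if for j = 1, 2: (∇_{β_j} f(β*))_i = 0 for all i ∈ Γ(β_j*) in case ‖β_j*‖₀ = s_j, and ∇_{β_j} f(β*) = 0 in case ‖β_j*‖₀ < s_j. -/
open Matrix Filter Topology Finset
open scoped RealInnerProductSpace

section AuxSCL

lemma concaveOn_mul_id' (y : ℝ) : ConcaveOn ℝ Set.univ (fun t : ℝ => y * t) := by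
  refine ⟨convex_univ, fun u _ v _ s t hs ht hst => le_of_eq ?_⟩
  simp only [smul_eq_mul]; ring

lemma hasDerivAt_logexp' (t : ℝ) :
    HasDerivAt (fun u : ℝ => Real.log (1 + Real.exp u)) (Real.exp t / (1 + Real.exp t)) t :=
  ((Real.hasDerivAt_exp t).const_add 1).log (by positivity)

lemma diff_logexp' : Differentiable ℝ (fun u : ℝ => Real.log (1 + Real.exp u)) :=
  fun t => (hasDerivAt_logexp' t).differentiableAt

lemma convexOn_logexp' : ConvexOn ℝ Set.univ (fun u : ℝ => Real.log (1 + Real.exp u)) := by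
  apply Monotone.convexOn_univ_of_deriv diff_logexp'
  have hd : deriv (fun u : ℝ => Real.log (1 + Real.exp u))
      = fun t => Real.exp t / (1 + Real.exp t) := funext fun t => (hasDerivAt_logexp' t).deriv
  rw [hd]
  intro s t hst
  have h1 : (0:ℝ) < 1 + Real.exp s := by positivity
  have h2 : (0:ℝ) < 1 + Real.exp t := by positivity
  rw [div_le_div_iff₀ h1 h2]
  nlinarith [Real.exp_le_exp.mpr hst, Real.exp_pos s, Real.exp_pos t]

lemma convexOn_logloss' (y : ℝ) :
    ConvexOn ℝ Set.univ (fun t : ℝ => Real.log (1 + Real.exp t) - y * t) := by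
  have h := convexOn_logexp'.sub (concaveOn_mul_id' y)
  exact h

lemma convexOn_sq_sub' (y : ℝ) : ConvexOn ℝ Set.univ (fun t : ℝ => (y - t) ^ 2) := by
  refine ⟨convex_univ, fun u _ v _ s t hs ht hst => ?_⟩
  simp only [smul_eq_mul]
  have ht' : t = 1 - s := by linarith
  subst ht'
  have key : s * (y - u) ^ 2 + (1 - s) * (y - v) ^ 2 - (y - (s * u + (1 - s) * v)) ^ 2
      = s * (1 - s) * (u - v) ^ 2 := by ring
  nlinarith [mul_nonneg (mul_nonneg hs ht) (sq_nonneg (u - v)), key]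

lemma convexOn_sq' : ConvexOn ℝ Set.univ (fun t : ℝ => t ^ 2) := by
  have h := convexOn_sq_sub' 0
  simpa using h

lemma convexOn_comp_of_linear' {E : Type*} [AddCommGroup E] [Module ℝ E] {φ : ℝ → ℝ}
    (hφ : ConvexOn ℝ Set.univ φ) (A : E → ℝ)
    (hA : ∀ (s t : ℝ) (u v : E), A (s • u + t • v) = s * A u + t * A v) :
    ConvexOn ℝ Set.univ (fun β => φ (A β)) := by
  refine ⟨convex_univ, fun u _ v _ s t hs ht hst => ?_⟩
  simp only [smul_eq_mul]
  rw [hA]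
  simpa [smul_eq_mul] using hφ.2 (Set.mem_univ (A u)) (Set.mem_univ (A v)) hs ht hst

lemma convexOn_const_mul' {E : Type*} [AddCommGroup E] [Module ℝ E] {g : E → ℝ} (c : ℝ)
    (hc : 0 ≤ c) (hg : ConvexOn ℝ Set.univ g) : ConvexOn ℝ Set.univ fun x => c * g x := by
  refine ⟨convex_univ, fun u _ v _ s t hs ht hst => ?_⟩
  have h := hg.2 (Set.mem_univ u) (Set.mem_univ v) hs ht hst
  simp only [smul_eq_mul] at h ⊢
  nlinarith [mul_le_mul_of_nonneg_left h hc]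

lemma convexOn_add' {E : Type*} [AddCommGroup E] [Module ℝ E] {g h : E → ℝ}
    (hg : ConvexOn ℝ Set.univ g) (hh : ConvexOn ℝ Set.univ h) :
    ConvexOn ℝ Set.univ (fun x => g x + h x) := hg.add hh

lemma convexOn_finset_sum' {E ι : Type*} [AddCommGroup E] [Module ℝ E] (s : Finset ι)
    {g : ι → E → ℝ} (h : ∀ i ∈ s, ConvexOn ℝ Set.univ (g i)) :
    ConvexOn ℝ Set.univ (fun x => ∑ i ∈ s, g i x) := by
  classical
  induction s using Finset.cons_induction with
  | empty => simpa using convexOn_const (0:ℝ) convex_univ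
  | cons i s hi ih =>
      simp only [Finset.sum_cons]
      exact convexOn_add' (h i (Finset.mem_cons_self i s)) (ih fun j hj => h j (by simp [hj]))

lemma convexOn_le_of_fderiv_zero' {E : Type*} [NormedAddCommGroup E] [NormedSpace ℝ E]
    {f : E → ℝ} (hconv : ConvexOn ℝ Set.univ f) {x y : E} {D : E →L[ℝ] ℝ}
    (hfd : HasFDerivAt f D x) (hD : D (y - x) = 0) : f x ≤ f y := by
  set g : ℝ → ℝ := fun t => f (x + t • (y - x)) with hgdef
  have hgconv : ConvexOn ℝ Set.univ g := by
    have h := hconv.comp_affineMap (AffineMap.lineMap x y : ℝ →ᵃ[ℝ] E)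
    simp only [Set.preimage_univ] at h
    have e : g = f ∘ (AffineMap.lineMap x y : ℝ →ᵃ[ℝ] E) := by
      funext t
      simp only [hgdef, Function.comp, AffineMap.lineMap_apply, vsub_eq_sub, vadd_eq_add]
      rw [add_comm]
    rw [e]; exact h
  have hline : HasDerivAt (fun t : ℝ => x + t • (y - x)) (y - x) 0 := by
    simpa using ((hasDerivAt_id (0:ℝ)).smul_const (y - x)).const_add x
  have hfd' : HasFDerivAt f D (x + (0:ℝ) • (y - x)) := by simpa using hfd
  have hgd : HasDerivAt g (D (y - x)) 0 := hfd'.comp_hasDerivAt 0 hline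
  have hslope := hgconv.le_slope_of_hasDerivAt (Set.mem_univ (0:ℝ)) (Set.mem_univ 1)
    one_pos hgd
  rw [hD, slope_def_field] at hslope
  have hg0 : g 0 = f x := by simp [hgdef]
  have hg1 : g 1 = f y := by simp [hgdef]
  rw [hg0, hg1] at hslope
  linarith

lemma block_aux' {n : ℕ} (y : Fin n → ℝ) {E : Type*} [NormedAddCommGroup E] [NormedSpace ℝ E]
    (A : Fin n → E → ℝ)
    (hlin : ∀ (i : Fin n) (s t : ℝ) (u v : E), A i (s • u + t • v) = s * A i u + t * A i v)
    (hdiff : ∀ i, Differentiable ℝ (A i)) :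
    (ConvexOn ℝ Set.univ (fun β => ∑ i, (Real.log (1 + Real.exp (A i β)) - y i * A i β))
      ∧ Differentiable ℝ (fun β => ∑ i, (Real.log (1 + Real.exp (A i β)) - y i * A i β)))
    ∧ (ConvexOn ℝ Set.univ (fun β => (1/2 : ℝ) * ∑ i, (y i - A i β) ^ 2)
      ∧ Differentiable ℝ (fun β => (1/2 : ℝ) * ∑ i, (y i - A i β) ^ 2)) := by
  refine ⟨⟨?_, ?_⟩, ?_, ?_⟩
  · exact convexOn_finset_sum' Finset.univ
      (fun i _ => convexOn_comp_of_linear' (convexOn_logloss' (y i)) (A i) (hlin i))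
  · exact Differentiable.fun_sum fun i _ =>
      (diff_logexp'.comp (hdiff i)).sub ((hdiff i).const_mul (y i))
  · exact convexOn_const_mul' _ (by norm_num)
      (convexOn_finset_sum' Finset.univ
        (fun i _ => convexOn_comp_of_linear' (convexOn_sq_sub' (y i)) (A i) (hlin i)))
  · exact Differentiable.const_mul
      (Differentiable.fun_sum fun i _ => ((differentiable_const (y i)).sub (hdiff i)).pow 2) _

lemma zeroNorm_mono' {p : ℕ} {x y : EuclideanSpace ℝ (Fin p)} (h : ∀ i, x i ≠ 0 → y i ≠ 0) :
    zeroNorm x ≤ zeroNorm y :=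
  Set.ncard_le_ncard (fun i hi => h i hi) (Set.toFinite _)

lemma zeroNorm_le_succ' {p : ℕ} {x y : EuclideanSpace ℝ (Fin p)} (i₀ : Fin p)
    (h : ∀ i, x i ≠ 0 → y i ≠ 0 ∨ i = i₀) : zeroNorm x ≤ zeroNorm y + 1 := by
  have hsub : {i | x i ≠ 0} ⊆ {i | y i ≠ 0} ∪ {i₀} := by
    intro i hi
    rcases h i hi with h' | h'
    · exact Or.inl h'
    · exact Or.inr h'
  calc zeroNorm x ≤ ({i | y i ≠ 0} ∪ {i₀} : Set (Fin p)).ncard :=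
        Set.ncard_le_ncard hsub (Set.toFinite _)
    _ ≤ ({i | y i ≠ 0} : Set (Fin p)).ncard + ({i₀} : Set (Fin p)).ncard :=
        Set.ncard_union_le _ _
    _ = zeroNorm y + 1 := by rw [Set.ncard_singleton]; rfl

lemma natAdd_ne_castAdd' {p₁ p₂ : ℕ} (i : Fin p₁) (j : Fin p₂) :
    (Fin.natAdd p₁ j : Fin (p₁ + p₂)) ≠ Fin.castAdd p₂ i := by
  intro h
  have hi := i.isLt
  rw [Fin.ext_iff] at h
  simp only [Fin.coe_natAdd, Fin.coe_castAdd] at h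
  omega

lemma castAdd_inj' {p₁ p₂ : ℕ} {i j : Fin p₁} :
    (Fin.castAdd p₂ j : Fin (p₁ + p₂)) = Fin.castAdd p₂ i ↔ j = i := by
  rw [Fin.ext_iff, Fin.ext_iff]; simp

lemma natAdd_inj' {p₁ p₂ : ℕ} {i j : Fin p₂} :
    (Fin.natAdd p₁ j : Fin (p₁ + p₂)) = Fin.natAdd p₁ i ↔ j = i := by
  rw [Fin.ext_iff, Fin.ext_iff]; simp

end AuxSCL

/-- for `ℓ ∈ {ℓ_log, ℓ_lin}`, a feasible point `β* = (β₁*; β₂*)` is a local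
minimizer of the SCL problem iff for `j = 1, 2`: `(∇_{β_j}f(β*))_i = 0` for all
`i ∈ Γ(β_j*)` when `‖β_j*‖₀ = s_j`, and `∇_{β_j}f(β*) = 0` when `‖β_j*‖₀ < s_j`. -/
theorem scl_local_minimizer_iff_first_order {n p₁ p₂ : ℕ} (hn : 0 < n)
    (X : Matrix (Fin n) (Fin p₁) ℝ) (Z : Matrix (Fin n) (Fin p₂) ℝ) (y : Fin n → ℝ)
    (s₁ s₂ : ℕ) (hs₁ : 0 < s₁) (hs₁p : s₁ < p₁) (hs₂ : 0 < s₂) (hs₂p : s₂ < p₂)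
    (a b c : ℝ) (ha : 0 < a) (hb : 0 < b) (hc : 0 < c)
    (ℓ₁ : Matrix (Fin n) (Fin p₁) ℝ → (Fin n → ℝ) → EuclideanSpace ℝ (Fin p₁) → ℝ)
    (ℓ₂ : Matrix (Fin n) (Fin p₂) ℝ → (Fin n → ℝ) → EuclideanSpace ℝ (Fin p₂) → ℝ)
    (hℓ : (ℓ₁ = ellLog ∧ ℓ₂ = ellLog) ∨ (ℓ₁ = ellLin ∧ ℓ₂ = ellLin))
    (f : EuclideanSpace ℝ (Fin (p₁ + p₂)) → ℝ)
    (hf : f = sclObj ℓ₁ ℓ₂ X Z y a b c)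
    (βs : EuclideanSpace ℝ (Fin (p₁ + p₂)))
    (hfeas₁ : zeroNorm (part1 βs) ≤ s₁) (hfeas₂ : zeroNorm (part2 βs) ≤ s₂) :
    IsLocalMinOn f (feas p₁ p₂ s₁ s₂) βs ↔
      ((zeroNorm (part1 βs) = s₁ →
          ∀ i, part1 βs i ≠ 0 → part1 (gradient f βs) i = 0) ∧
       (zeroNorm (part1 βs) < s₁ → part1 (gradient f βs) = 0) ∧
       (zeroNorm (part2 βs) = s₂ →
          ∀ i, part2 βs i ≠ 0 → part2 (gradient f βs) i = 0) ∧
       (zeroNorm (part2 βs) < s₂ → part2 (gradient f βs) = 0)) := by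
  subst hf
  classical
  set F : EuclideanSpace ℝ (Fin (p₁ + p₂)) → ℝ := sclObj ℓ₁ ℓ₂ X Z y a b c with hF
  -- linearity of the evaluation maps
  have hAlin : ∀ (i : Fin n) (s t : ℝ) (u v : EuclideanSpace ℝ (Fin (p₁ + p₂))),
      X.mulVec (part1 (s • u + t • v)) i
        = s * X.mulVec (part1 u) i + t * X.mulVec (part1 v) i := by
    intro i s t u v
    simp only [Matrix.mulVec, dotProduct, part1, WithLp.ofLp_toLp, PiLp.add_apply, PiLp.smul_apply,
      smul_eq_mul, Finset.mul_sum]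
    rw [← Finset.sum_add_distrib]
    exact Finset.sum_congr rfl fun j _ => by ring
  have hBlin : ∀ (i : Fin n) (s t : ℝ) (u v : EuclideanSpace ℝ (Fin (p₁ + p₂))),
      Z.mulVec (part2 (s • u + t • v)) i
        = s * Z.mulVec (part2 u) i + t * Z.mulVec (part2 v) i := by
    intro i s t u v
    simp only [Matrix.mulVec, dotProduct, part2, WithLp.ofLp_toLp, PiLp.add_apply, PiLp.smul_apply,
      smul_eq_mul, Finset.mul_sum]
    rw [← Finset.sum_add_distrib]
    exact Finset.sum_congr rfl fun j _ => by ring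
  -- differentiability of the evaluation maps
  have hcoord : ∀ k : Fin (p₁ + p₂),
      Differentiable ℝ (fun β : EuclideanSpace ℝ (Fin (p₁ + p₂)) => β k) := fun k =>
    (EuclideanSpace.proj k : EuclideanSpace ℝ (Fin (p₁ + p₂)) →L[ℝ] ℝ).differentiable
  have hAdiff : ∀ i : Fin n, Differentiable ℝ
      (fun β : EuclideanSpace ℝ (Fin (p₁ + p₂)) => X.mulVec (part1 β) i) := by
    intro i
    have heq : (fun β : EuclideanSpace ℝ (Fin (p₁ + p₂)) => X.mulVec (part1 β) i)
        = fun β => ∑ j, X i j * β (Fin.castAdd p₂ j) := rfl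
    rw [heq]
    exact Differentiable.fun_sum fun j _ => (hcoord _).const_mul _
  have hBdiff : ∀ i : Fin n, Differentiable ℝ
      (fun β : EuclideanSpace ℝ (Fin (p₁ + p₂)) => Z.mulVec (part2 β) i) := by
    intro i
    have heq : (fun β : EuclideanSpace ℝ (Fin (p₁ + p₂)) => Z.mulVec (part2 β) i)
        = fun β => ∑ j, Z i j * β (Fin.natAdd p₁ j) := rfl
    rw [heq]
    exact Differentiable.fun_sum fun j _ => (hcoord _).const_mul _
  obtain ⟨⟨hc1log, hd1log⟩, ⟨hc1lin, hd1lin⟩⟩ :=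
    block_aux' y (fun i β => X.mulVec (part1 β) i) hAlin hAdiff
  obtain ⟨⟨hc2log, hd2log⟩, ⟨hc2lin, hd2lin⟩⟩ :=
    block_aux' y (fun i β => Z.mulVec (part2 β) i) hBlin hBdiff
  have h1 : ConvexOn ℝ Set.univ
        (fun β : EuclideanSpace ℝ (Fin (p₁ + p₂)) => ℓ₁ X y (part1 β))
      ∧ Differentiable ℝ
        (fun β : EuclideanSpace ℝ (Fin (p₁ + p₂)) => ℓ₁ X y (part1 β)) := by
    rcases hℓ with ⟨hl, _⟩ | ⟨hl, _⟩ <;> subst hl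
    · exact ⟨hc1log, hd1log⟩
    · exact ⟨hc1lin, hd1lin⟩
  have h2 : ConvexOn ℝ Set.univ
        (fun β : EuclideanSpace ℝ (Fin (p₁ + p₂)) => ℓ₂ Z y (part2 β))
      ∧ Differentiable ℝ
        (fun β : EuclideanSpace ℝ (Fin (p₁ + p₂)) => ℓ₂ Z y (part2 β)) := by
    rcases hℓ with ⟨_, hl⟩ | ⟨_, hl⟩ <;> subst hl
    · exact ⟨hc2log, hd2log⟩
    · exact ⟨hc2lin, hd2lin⟩
  have h3c : ConvexOn ℝ Set.univ (fun β : EuclideanSpace ℝ (Fin (p₁ + p₂)) =>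
      ∑ i, (X.mulVec (part1 β) i - Z.mulVec (part2 β) i) ^ 2) :=
    convexOn_finset_sum' Finset.univ fun i _ =>
      convexOn_comp_of_linear' convexOn_sq'
        (fun β => X.mulVec (part1 β) i - Z.mulVec (part2 β) i)
        (fun s t u v => by beta_reduce; rw [hAlin, hBlin]; ring)
  have h3d : Differentiable ℝ (fun β : EuclideanSpace ℝ (Fin (p₁ + p₂)) =>
      ∑ i, (X.mulVec (part1 β) i - Z.mulVec (part2 β) i) ^ 2) :=
    Differentiable.fun_sum fun i _ => ((hAdiff i).sub (hBdiff i)).pow 2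
  have hconvF : ConvexOn ℝ Set.univ F :=
    convexOn_const_mul' _ (by positivity)
      (convexOn_add' (convexOn_add' (convexOn_const_mul' a ha.le h1.1)
        (convexOn_const_mul' b hb.le h2.1)) (convexOn_const_mul' (c/2) (by positivity) h3c))
  have hdiffF : Differentiable ℝ F :=
    Differentiable.const_mul
      (((h1.2.const_mul a).add (h2.2.const_mul b)).add (h3d.const_mul (c/2))) _
  -- the gradient and directional derivatives
  have hfd : HasFDerivAt F ((InnerProductSpace.toDual ℝ _) (gradient F βs)) βs :=
    hasGradientAt_iff_hasFDerivAt.mp (hdiffF βs).hasGradientAt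
  have hinner : ∀ v : EuclideanSpace ℝ (Fin (p₁ + p₂)),
      (InnerProductSpace.toDual ℝ _) (gradient F βs) v = ∑ k, gradient F βs k * v k := by
    intro v
    rw [InnerProductSpace.toDual_apply_apply]
    simp only [PiLp.inner_apply, RCLike.inner_apply, conj_trivial, mul_comm]
  have hlineDeriv : ∀ v : EuclideanSpace ℝ (Fin (p₁ + p₂)),
      HasDerivAt (fun t : ℝ => F (βs + t • v)) (∑ k, gradient F βs k * v k) 0 := by
    intro v
    have hl : HasDerivAt (fun t : ℝ => βs + t • v) v 0 := by
      simpa using ((hasDerivAt_id (0:ℝ)).smul_const v).const_add βs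
    have hfd' : HasFDerivAt F ((InnerProductSpace.toDual ℝ _) (gradient F βs))
        (βs + (0:ℝ) • v) := by simpa using hfd
    have h := hfd'.comp_hasDerivAt 0 hl
    rw [← hinner v]
    exact h
  constructor
  · -- forward direction
    intro hmin
    have hmin' : ∀ᶠ x in 𝓝[feas p₁ p₂ s₁ s₂] βs, F βs ≤ F x := hmin
    have main : ∀ idx : Fin (p₁ + p₂),
        (∀ t : ℝ, (βs + t • EuclideanSpace.single idx (1:ℝ)) ∈ feas p₁ p₂ s₁ s₂) →
        gradient F βs idx = 0 := by
      intro idx hfeasline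
      have htends : Tendsto (fun t : ℝ => βs + t • EuclideanSpace.single idx (1:ℝ)) (𝓝 0)
          (𝓝[feas p₁ p₂ s₁ s₂] βs) := by
        apply tendsto_nhdsWithin_of_tendsto_nhds_of_eventually_within
        · have hc : Continuous (fun t : ℝ => βs + t • EuclideanSpace.single idx (1:ℝ)) := by
            fun_prop
          have h := hc.tendsto 0
          simpa using h
        · exact Eventually.of_forall hfeasline
      have hev := htends.eventually hmin'
      have hlocmin : IsLocalMin (fun t : ℝ => F (βs + t • EuclideanSpace.single idx (1:ℝ))) 0 := by
        filter_upwards [hev] with t ht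
        simpa using ht
      have hz := hlocmin.hasDerivAt_eq_zero (hlineDeriv _)
      simpa [EuclideanSpace.single_apply, mul_ite, mul_one, mul_zero,
        Finset.sum_ite_eq', Finset.mem_univ] using hz
    refine ⟨?_, ?_, ?_, ?_⟩
    · -- ‖β₁‖₀ = s₁, support coordinates
      intro hEq i hi
      show gradient F βs (Fin.castAdd p₂ i) = 0
      apply main
      intro t
      constructor
      · refine le_trans (zeroNorm_mono' ?_) hfeas₁
        intro j hj
        by_cases hji : j = i
        · subst hji; exact hi
        · have : part1 (βs + t • EuclideanSpace.single (Fin.castAdd p₂ i) (1:ℝ)) j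
              = part1 βs j := by
            show (βs + t • EuclideanSpace.single (Fin.castAdd p₂ i) (1:ℝ)) (Fin.castAdd p₂ j)
              = βs (Fin.castAdd p₂ j)
            simp [EuclideanSpace.single_apply, castAdd_inj', hji]
          rwa [this] at hj
      · have hp2 : part2 (βs + t • EuclideanSpace.single (Fin.castAdd p₂ i) (1:ℝ)) = part2 βs := by
          ext j
          show (βs + t • EuclideanSpace.single (Fin.castAdd p₂ i) (1:ℝ)) (Fin.natAdd p₁ j)
            = βs (Fin.natAdd p₁ j)
          simp [EuclideanSpace.single_apply, natAdd_ne_castAdd' i j]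
        rw [hp2]; exact hfeas₂
    · -- ‖β₁‖₀ < s₁
      intro hlt
      ext i
      show gradient F βs (Fin.castAdd p₂ i) = 0
      apply main
      intro t
      constructor
      · refine le_trans (zeroNorm_le_succ' (y := part1 βs) i ?_) (by omega)
        intro j hj
        by_cases hji : j = i
        · exact Or.inr hji
        · refine Or.inl ?_
          have : part1 (βs + t • EuclideanSpace.single (Fin.castAdd p₂ i) (1:ℝ)) j
              = part1 βs j := by
            show (βs + t • EuclideanSpace.single (Fin.castAdd p₂ i) (1:ℝ)) (Fin.castAdd p₂ j)
              = βs (Fin.castAdd p₂ j)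
            simp [EuclideanSpace.single_apply, castAdd_inj', hji]
          rwa [this] at hj
      · have hp2 : part2 (βs + t • EuclideanSpace.single (Fin.castAdd p₂ i) (1:ℝ)) = part2 βs := by
          ext j
          show (βs + t • EuclideanSpace.single (Fin.castAdd p₂ i) (1:ℝ)) (Fin.natAdd p₁ j)
            = βs (Fin.natAdd p₁ j)
          simp [EuclideanSpace.single_apply, natAdd_ne_castAdd' i j]
        rw [hp2]; exact hfeas₂
    · -- ‖β₂‖₀ = s₂, support coordinates
      intro hEq i hi
      show gradient F βs (Fin.natAdd p₁ i) = 0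
      apply main
      intro t
      constructor
      · have hp1 : part1 (βs + t • EuclideanSpace.single (Fin.natAdd p₁ i) (1:ℝ)) = part1 βs := by
          ext j
          show (βs + t • EuclideanSpace.single (Fin.natAdd p₁ i) (1:ℝ)) (Fin.castAdd p₂ j)
            = βs (Fin.castAdd p₂ j)
          simp [EuclideanSpace.single_apply, (natAdd_ne_castAdd' j i).symm]
        rw [hp1]; exact hfeas₁
      · refine le_trans (zeroNorm_mono' ?_) hfeas₂
        intro j hj
        by_cases hji : j = i
        · subst hji; exact hi
        · have : part2 (βs + t • EuclideanSpace.single (Fin.natAdd p₁ i) (1:ℝ)) j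
              = part2 βs j := by
            show (βs + t • EuclideanSpace.single (Fin.natAdd p₁ i) (1:ℝ)) (Fin.natAdd p₁ j)
              = βs (Fin.natAdd p₁ j)
            simp [EuclideanSpace.single_apply, natAdd_inj', hji]
          rwa [this] at hj
    · -- ‖β₂‖₀ < s₂
      intro hlt
      ext i
      show gradient F βs (Fin.natAdd p₁ i) = 0
      apply main
      intro t
      constructor
      · have hp1 : part1 (βs + t • EuclideanSpace.single (Fin.natAdd p₁ i) (1:ℝ)) = part1 βs := by
          ext j
          show (βs + t • EuclideanSpace.single (Fin.natAdd p₁ i) (1:ℝ)) (Fin.castAdd p₂ j)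
            = βs (Fin.castAdd p₂ j)
          simp [EuclideanSpace.single_apply, (natAdd_ne_castAdd' j i).symm]
        rw [hp1]; exact hfeas₁
      · refine le_trans (zeroNorm_le_succ' (y := part2 βs) i ?_) (by omega)
        intro j hj
        by_cases hji : j = i
        · exact Or.inr hji
        · refine Or.inl ?_
          have : part2 (βs + t • EuclideanSpace.single (Fin.natAdd p₁ i) (1:ℝ)) j
              = part2 βs j := by
            show (βs + t • EuclideanSpace.single (Fin.natAdd p₁ i) (1:ℝ)) (Fin.natAdd p₁ j)
              = βs (Fin.natAdd p₁ j)
            simp [EuclideanSpace.single_apply, natAdd_inj', hji]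
          rwa [this] at hj
  · -- backward direction
    rintro ⟨h1eq, h1lt, h2eq, h2lt⟩
    obtain ⟨ε, hεpos, hεprop⟩ : ∃ ε > (0:ℝ), ∀ k : Fin (p₁ + p₂), βs k ≠ 0 → ε ≤ |βs k| := by
      set T : Finset (Fin (p₁ + p₂)) := Finset.univ.filter (fun k => βs k ≠ 0) with hT
      rcases Finset.eq_empty_or_nonempty T with hT0 | hTne
      · refine ⟨1, one_pos, fun k hk => absurd hT0 (Finset.ne_empty_of_mem (a := k) ?_)⟩
        rw [hT]
        simp [Finset.mem_filter, hk]
      · refine ⟨T.inf' hTne fun k => |βs k|, ?_, fun k hk => Finset.inf'_le _ ?_⟩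
        · rw [gt_iff_lt, Finset.lt_inf'_iff]
          intro k hk
          have : βs k ≠ 0 := (Finset.mem_filter.mp hk).2
          exact abs_pos.mpr this
        · rw [hT]
          simp [Finset.mem_filter, hk]
    have hstay : ∀ β : EuclideanSpace ℝ (Fin (p₁ + p₂)), dist β βs < ε →
        ∀ k, βs k ≠ 0 → β k ≠ 0 := by
      intro β hβ k hk hcontra
      have h1 : |β k - βs k| ≤ ‖β - βs‖ := by
        have h2 := abs_real_inner_le_norm (β - βs) (EuclideanSpace.single k (1:ℝ))
        rw [EuclideanSpace.norm_single] at h2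
        have h3 : ⟪β - βs, EuclideanSpace.single k (1:ℝ)⟫ = β k - βs k := by
          simp [PiLp.inner_apply, RCLike.inner_apply, conj_trivial,
            EuclideanSpace.single_apply, mul_ite, Finset.sum_ite_eq']
        rw [h3] at h2
        simpa using h2
      rw [hcontra] at h1
      have h4 : ε ≤ |βs k| := hεprop k hk
      rw [← dist_eq_norm] at h1
      simp only [zero_sub, abs_neg] at h1
      linarith
    show ∀ᶠ x in 𝓝[feas p₁ p₂ s₁ s₂] βs, F βs ≤ F x
    have hball : Metric.ball βs ε ∈ 𝓝[feas p₁ p₂ s₁ s₂] βs :=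
      nhdsWithin_le_nhds (Metric.ball_mem_nhds _ hεpos)
    filter_upwards [hball, self_mem_nhdsWithin] with β hβball hβfeas
    have hdist : dist β βs < ε := Metric.mem_ball.mp hβball
    refine convexOn_le_of_fderiv_zero' hconvF hfd ?_
    rw [hinner]
    apply Finset.sum_eq_zero
    intro k _
    rw [mul_eq_zero]
    induction k using Fin.addCases with
    | left i =>
        rcases lt_or_eq_of_le hfeas₁ with hlt | hEq
        · left
          have hz := h1lt hlt
          exact congrArg (fun v : EuclideanSpace ℝ (Fin p₁) => v i) hz
        · by_cases hi : part1 βs i ≠ 0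
          · left
            exact h1eq hEq i hi
          · push_neg at hi
            right
            have hset : {j | part1 βs j ≠ 0} = {j | part1 β j ≠ 0} := by
              apply Set.eq_of_subset_of_ncard_le
              · intro j hj
                exact hstay β hdist (Fin.castAdd p₂ j) hj
              · calc ({j | part1 β j ≠ 0} : Set (Fin p₁)).ncard ≤ s₁ := hβfeas.1
                  _ = ({j | part1 βs j ≠ 0} : Set (Fin p₁)).ncard := hEq.symm
              · exact Set.toFinite _
            have hβi : part1 β i = 0 := by
              by_contra hne
              have hmem : i ∈ {j | part1 β j ≠ 0} := hne
              rw [← hset] at hmem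
              exact hmem hi
            show (β - βs) (Fin.castAdd p₂ i) = 0
            have : (β - βs) (Fin.castAdd p₂ i) = part1 β i - part1 βs i := rfl
            rw [this, hβi, hi, sub_zero]
    | right i =>
        rcases lt_or_eq_of_le hfeas₂ with hlt | hEq
        · left
          have hz := h2lt hlt
          exact congrArg (fun v : EuclideanSpace ℝ (Fin p₂) => v i) hz
        · by_cases hi : part2 βs i ≠ 0
          · left
            exact h2eq hEq i hi
          · push_neg at hi
            right
            have hset : {j | part2 βs j ≠ 0} = {j | part2 β j ≠ 0} := by
              apply Set.eq_of_subset_of_ncard_le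
              · intro j hj
                exact hstay β hdist (Fin.natAdd p₁ j) hj
              · calc ({j | part2 β j ≠ 0} : Set (Fin p₂)).ncard ≤ s₂ := hβfeas.2
                  _ = ({j | part2 βs j ≠ 0} : Set (Fin p₂)).ncard := hEq.symm
              · exact Set.toFinite _
            have hβi : part2 β i = 0 := by
              by_contra hne
              have hmem : i ∈ {j | part2 β j ≠ 0} := hne
              rw [← hset] at hmem
              exact hmem hi
            show (β - βs) (Fin.natAdd p₁ i) = 0
            have : (β - βs) (Fin.natAdd p₁ i) = part2 β i - part2 βs i := rfl
            rw [this, hβi, hi, sub_zero]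
end

section
/- Let ℓ ∈ {ℓ_log, ℓ_lin}, let f be the SCL objective, and let α > 0. A feasible point β* = (β₁*; β₂*) is an α-stationary point of the SCL problem if and only if for j = 1, 2: in case ‖β_j*‖₀ = s_j, (∇_{β_j} f(β*))_i = 0 for all i ∈ Γ(β_j*) and α·|(∇_{β_j} f(β*))_i| ≤ (β_j*)↓_{s_j} for all i ∉ Γ(β_j*); and in case ‖β_j*‖₀ < s_j, ∇_{β_j} f(β*) = 0. -/
open Matrix Filter Topology Finset
open scoped RealInnerProductSpace

section Aux
lemma zeroNorm_eq {p : ℕ} (x : EuclideanSpace ℝ (Fin p)) :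
    zeroNorm x = (Finset.univ.filter (fun i => x i ≠ 0)).card := by
  rw [zeroNorm, Set.ncard_eq_toFinset_card']
  congr 1
  ext i
  simp


lemma countP_split (l : List ℝ) (P : ℝ → Bool) (k : ℕ) :
    l.countP P = (l.take k).countP P + (l.drop k).countP P := by
  conv_lhs => rw [← List.take_append_drop k l]
  exact List.countP_append


lemma sorted_get_le {l : List ℝ} (hl : l.Pairwise (· ≤ ·)) {k : ℕ} (hk : k < l.length) {x : ℝ}
    (h : k < l.countP (fun a => decide (a ≤ x))) : l.get ⟨k, hk⟩ ≤ x := by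
  by_contra hx
  push_neg at hx
  have hd : (l.drop k).countP (fun a => decide (a ≤ x)) = 0 := by
    rw [List.countP_eq_zero]
    intro a ha
    obtain ⟨j, hj⟩ := List.get_of_mem ha
    have : a = l.get ⟨k + j, by have := j.2; simp [List.length_drop] at this; omega⟩ := by
      rw [← hj]; simp
    have hle : l.get ⟨k, hk⟩ ≤ l.get ⟨k + j, by have := j.2; simp [List.length_drop] at this; omega⟩ :=
      hl.rel_get_of_le (by simp)
    simp only [this, decide_eq_true_eq]
    push_neg
    linarith
  have := countP_split l (fun a => decide (a ≤ x)) k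
  rw [hd] at this
  have h2 : (l.take k).countP (fun a => decide (a ≤ x)) ≤ k := by
    calc _ ≤ (l.take k).length := List.countP_le_length
    _ ≤ k := by simp
  omega


lemma sorted_le_get {l : List ℝ} (hl : l.Pairwise (· ≤ ·)) {k : ℕ} (hk : k < l.length) {x : ℝ}
    (h : l.countP (fun a => decide (a < x)) ≤ k) : x ≤ l.get ⟨k, hk⟩ := by
  by_contra hx
  push_neg at hx
  have ht : (l.take (k + 1)).countP (fun a => decide (a < x)) = (l.take (k + 1)).length := by
    rw [List.countP_eq_length]
    intro a ha
    obtain ⟨j, hj⟩ := List.get_of_mem ha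
    have hjl : (j : ℕ) < l.length := by
      have := j.2; simp [List.length_take] at this; omega
    have hjk : (j : ℕ) ≤ k := by
      have := j.2; simp [List.length_take] at this; omega
    have : a = l.get ⟨j, hjl⟩ := by rw [← hj]; simp
    have hle : l.get ⟨j, hjl⟩ ≤ l.get ⟨k, hk⟩ := hl.rel_get_of_le (by simpa)
    simp only [this, decide_eq_true_eq]
    linarith
  have hlen : (l.take (k + 1)).length = k + 1 := by simp; omega
  have := countP_split l (fun a => decide (a < x)) (k + 1)
  omega


lemma kth_eq_min {p s : ℕ} (hs : 0 < s) (hsp : s ≤ p) (x : EuclideanSpace ℝ (Fin p))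
    (h : zeroNorm x = s) :
    (∃ j, x j ≠ 0 ∧ kthLargestAbs x s = |x j|) ∧
      ∀ j, x j ≠ 0 → kthLargestAbs x s ≤ |x j| := by
  set Γ : Finset (Fin p) := Finset.univ.filter (fun i => x i ≠ 0) with hΓ
  have hΓcard : Γ.card = s := by rw [hΓ, ← zeroNorm_eq, h]
  have hΓne : Γ.Nonempty := by rw [← Finset.card_pos, hΓcard]; exact hs
  set m : ℝ := (Γ.image fun j => |x j|).min' (hΓne.image _) with hm
  obtain ⟨j₀, hj₀Γ, hj₀⟩ := Finset.mem_image.mp ((Γ.image fun j => |x j|).min'_mem (hΓne.image _))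
  have hmj₀ : m = |x j₀| := by rw [hm, hj₀]
  have hmin : ∀ j, x j ≠ 0 → m ≤ |x j| := by
    intro j hj
    exact Finset.min'_le _ _ (Finset.mem_image_of_mem _ (by simp [hΓ, hj]))
  have hj₀ne : x j₀ ≠ 0 := by simpa [hΓ] using hj₀Γ
  have hmpos : 0 < m := by rw [hmj₀]; exact abs_pos.mpr hj₀ne
  set M : Multiset ℝ := Finset.univ.val.map fun i => |x i| with hM
  set L : List ℝ := M.sort (· ≤ ·) with hL
  have hlen : L.length = p := by simp [hL, hM]
  have hkL : p - s < L.length := by omega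
  have hcount : ∀ (P : ℝ → Prop) (_ : DecidablePred P),
      L.countP (fun a => decide (P a)) = (Finset.univ.filter fun i => P |x i|).card := by
    intro P hP
    have h1 : L.countP (fun a => decide (P a)) = Multiset.countP P M := by
      rw [hL, ← Multiset.coe_countP, Multiset.sort_eq]
    rw [h1, hM, Multiset.countP_map]
    rfl
  have hzero : (Finset.univ.filter fun i => x i = 0).card = p - s := by
    have := Finset.card_filter_add_card_filter_not (s := (Finset.univ : Finset (Fin p)))
      (p := fun i => x i ≠ 0)
    simp only [Finset.card_univ, Fintype.card_fin] at this
    have h2 : (Finset.univ.filter fun i => ¬ x i ≠ 0) = Finset.univ.filter fun i => x i = 0 := by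
      simp
    rw [h2, ← hΓ, hΓcard] at this
    omega
  have hsorted : L.Pairwise (· ≤ ·) := Multiset.pairwise_sort _ _
  have hlb : m ≤ L.get ⟨p - s, hkL⟩ := by
    apply sorted_le_get hsorted
    have hc : L.countP (fun a => decide (a < m)) = (Finset.univ.filter fun i => |x i| < m).card :=
      hcount (fun a => a < m) inferInstance
    rw [hc]
    have heq : (Finset.univ.filter fun i => |x i| < m) =
        Finset.univ.filter fun i => x i = 0 := by
      ext i
      simp only [Finset.mem_filter, Finset.mem_univ, true_and]
      constructor
      · intro hi
        by_contra hne
        exact absurd (hmin i hne) (not_le.mpr hi)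
      · intro hi; rw [hi]; simpa using hmpos
    rw [heq, hzero]
  have hub : L.get ⟨p - s, hkL⟩ ≤ m := by
    apply sorted_get_le hsorted
    have hc : L.countP (fun a => decide (a ≤ m)) = (Finset.univ.filter fun i => |x i| ≤ m).card :=
      hcount (fun a => a ≤ m) inferInstance
    rw [hc]
    have hsub : insert j₀ (Finset.univ.filter fun i => x i = 0) ⊆
        Finset.univ.filter fun i => |x i| ≤ m := by
      intro i hi
      simp only [Finset.mem_insert, Finset.mem_filter, Finset.mem_univ, true_and] at hi ⊢
      rcases hi with rfl | hi
      · exact le_of_eq hmj₀.symm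
      · rw [hi]; simp; positivity
    have hcard : (insert j₀ (Finset.univ.filter fun i => x i = 0)).card = p - s + 1 := by
      rw [Finset.card_insert_of_notMem (by simp [hj₀ne]), hzero]
    have := Finset.card_le_card hsub
    omega
  have hkth : kthLargestAbs x s = m := by
    rw [kthLargestAbs, ← hM, ← hL, List.getD_eq_getElem L 0 hkL]
    have : L[p-s] = L.get ⟨p - s, hkL⟩ := rfl
    rw [this]
    linarith
  exact ⟨⟨j₀, hj₀ne, by rw [hkth, hmj₀]⟩, fun j hj => by rw [hkth]; exact hmin j hj⟩


lemma norm_sub_le_norm_sub_iff {p : ℕ} (u v w : EuclideanSpace ℝ (Fin p)) :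
    ‖u - w‖ ≤ ‖v - w‖ ↔ ∑ i, (u i - w i) ^ 2 ≤ ∑ i, (v i - w i) ^ 2 := by
  rw [← dist_eq_norm, ← dist_eq_norm, EuclideanSpace.dist_eq, EuclideanSpace.dist_eq,
    Real.sqrt_le_sqrt_iff (by positivity)]
  simp only [Real.dist_eq, sq_abs]


lemma sum_compl_le {p : ℕ} (w : Fin p → ℝ) (m : ℝ) (Γ T : Finset (Fin p))
    (hcard : T.card ≤ Γ.card)
    (hΓ : ∀ i ∈ Γ, m ^ 2 ≤ w i ^ 2) (hΓc : ∀ i ∉ Γ, w i ^ 2 ≤ m ^ 2) :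
    ∑ i ∈ Γᶜ, w i ^ 2 ≤ ∑ i ∈ Tᶜ, w i ^ 2 := by
  have e1 : Γᶜ \ Tᶜ = T \ Γ := by
    ext i
    simp only [Finset.mem_sdiff, Finset.mem_compl, not_not]
    tauto
  have e2 : Tᶜ \ Γᶜ = Γ \ T := by
    ext i
    simp only [Finset.mem_sdiff, Finset.mem_compl, not_not]
    tauto
  have d1 := Finset.sum_inter_add_sum_sdiff Γᶜ Tᶜ (fun i => w i ^ 2)
  have d2 := Finset.sum_inter_add_sum_sdiff Tᶜ Γᶜ (fun i => w i ^ 2)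
  rw [e1] at d1
  rw [e2, Finset.inter_comm] at d2
  have hc : (T \ Γ).card ≤ (Γ \ T).card := by
    have h1 := Finset.card_sdiff_add_card_inter T Γ
    have h2 := Finset.card_sdiff_add_card_inter Γ T
    rw [Finset.inter_comm] at h2
    omega
  have k1 : ∑ i ∈ T \ Γ, w i ^ 2 ≤ (T \ Γ).card • m ^ 2 :=
    Finset.sum_le_card_nsmul _ _ _ (fun i hi => hΓc i (Finset.mem_sdiff.mp hi).2)
  have k2 : ((Γ \ T).card : ℝ) • m ^ 2 ≤ ∑ i ∈ Γ \ T, w i ^ 2 := by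
    have := Finset.card_nsmul_le_sum (Γ \ T) (fun i => w i ^ 2) (m ^ 2)
      (fun i hi => hΓ i (Finset.mem_sdiff.mp hi).1)
    simpa using this
  have k3 : ((T \ Γ).card : ℝ) * m ^ 2 ≤ ((Γ \ T).card : ℝ) * m ^ 2 :=
    mul_le_mul_of_nonneg_right (by exact_mod_cast hc) (sq_nonneg m)
  simp only [nsmul_eq_mul, smul_eq_mul] at k1 k2
  linarith


lemma proj_sparse_iff {p s : ℕ} (hs : 0 < s) (hsp : s < p) {α : ℝ} (hα : 0 < α)
    (β g : EuclideanSpace ℝ (Fin p)) (hfeas : zeroNorm β ≤ s) :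
    β ∈ projSet {v | zeroNorm v ≤ s} (β - α • g) ↔
      ((zeroNorm β = s → (∀ i, β i ≠ 0 → g i = 0) ∧
          (∀ i, β i = 0 → α * |g i| ≤ kthLargestAbs β s)) ∧
        (zeroNorm β < s → g = 0)) := by
  set w : EuclideanSpace ℝ (Fin p) := β - α • g with hwdef
  have hw : ∀ i, w i = β i - α * g i := fun i => rfl
  have hbw : ∀ i, β i - w i = α * g i := by intro i; rw [hw]; ring
  have hmem : β ∈ projSet {v | zeroNorm v ≤ s} w ↔
      ∀ v : EuclideanSpace ℝ (Fin p), zeroNorm v ≤ s →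
        ∑ i, (β i - w i) ^ 2 ≤ ∑ i, (v i - w i) ^ 2 := by
    constructor
    · intro h v hv
      exact (norm_sub_le_norm_sub_iff β v w).mp (h.2 v hv)
    · intro h
      exact ⟨hfeas, fun v hv => (norm_sub_le_norm_sub_iff β v w).mpr (h v hv)⟩
  rw [hmem]
  constructor
  · intro h
    have claim : ∀ i : Fin p, (β i ≠ 0 ∨ zeroNorm β < s) → g i = 0 := by
      intro i hi
      set v : EuclideanSpace ℝ (Fin p) := WithLp.toLp 2 (fun j => if j = i then w i else β j) with hv
      have hvj : ∀ j, j ≠ i → v j = β j := by intro j hj; simp [hv, hj]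
      have hfeasv : zeroNorm v ≤ s := by
        rcases hi with hi | hi
        · refine le_trans ?_ hfeas
          rw [zeroNorm_eq, zeroNorm_eq]
          apply Finset.card_le_card
          intro j hj
          simp only [Finset.mem_filter, Finset.mem_univ, true_and] at hj ⊢
          by_cases hji : j = i
          · subst hji; exact hi
          · rwa [hvj j hji] at hj
        · rw [zeroNorm_eq] at hi ⊢
          have hsub : Finset.univ.filter (fun j => v j ≠ 0) ⊆
              insert i (Finset.univ.filter (fun j => β j ≠ 0)) := by
            intro j hj
            simp only [Finset.mem_filter, Finset.mem_univ, true_and, Finset.mem_insert] at hj ⊢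
            by_cases hji : j = i
            · exact Or.inl hji
            · exact Or.inr (by rwa [hvj j hji] at hj)
          calc (Finset.univ.filter (fun j => v j ≠ 0)).card
              ≤ (insert i (Finset.univ.filter (fun j => β j ≠ 0))).card :=
                Finset.card_le_card hsub
            _ ≤ (Finset.univ.filter (fun j => β j ≠ 0)).card + 1 := Finset.card_insert_le _ _
            _ ≤ s := by omega
      have hle := h v hfeasv
      have hsum : ∑ j, (v j - w j) ^ 2 = ∑ j, (β j - w j) ^ 2 - (β i - w i) ^ 2 := by
        have h1 := Finset.sum_erase_add Finset.univ (fun j => (v j - w j) ^ 2) (Finset.mem_univ i)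
        have h2 := Finset.sum_erase_add Finset.univ (fun j => (β j - w j) ^ 2) (Finset.mem_univ i)
        have h3 : ∑ j ∈ Finset.univ.erase i, (v j - w j) ^ 2
            = ∑ j ∈ Finset.univ.erase i, (β j - w j) ^ 2 :=
          Finset.sum_congr rfl (fun j hj => by
            rw [hvj j (Finset.mem_erase.mp hj).1])
        have h4 : (v i - w i) ^ 2 = 0 := by simp [hv]
        simp only [h3, h4] at h1 h2 ⊢
        linarith
      rw [hsum] at hle
      have h5 : (β i - w i) ^ 2 ≤ 0 := by linarith
      rw [hbw i] at h5
      have h6 : α * g i = 0 := by nlinarith [sq_nonneg (α * g i)]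
      rcases mul_eq_zero.mp h6 with h7 | h7
      · exact absurd h7 hα.ne'
      · exact h7
    refine ⟨?_, fun hlt => ?_⟩
    · intro heq
      refine ⟨fun i hi => claim i (Or.inl hi), ?_⟩
      intro i hi0
      obtain ⟨⟨j₀, hj₀ne, hkthj₀⟩, hminall⟩ := kth_eq_min hs hsp.le β heq
      have hgj₀ : g j₀ = 0 := claim j₀ (Or.inl hj₀ne)
      have hij : i ≠ j₀ := by rintro rfl; exact hj₀ne hi0
      set v : EuclideanSpace ℝ (Fin p) :=
        WithLp.toLp 2 (fun j => if j = i then w i else if j = j₀ then 0 else β j) with hv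
      have hvj : ∀ j, j ≠ i → j ≠ j₀ → v j = β j := by intro j h1 h2; simp [hv, h1, h2]
      have hfeasv : zeroNorm v ≤ s := by
        rw [zeroNorm_eq]
        have hΓcard : (Finset.univ.filter (fun j => β j ≠ 0)).card = s := by
          rw [← zeroNorm_eq]; exact heq
        have hsub : Finset.univ.filter (fun j => v j ≠ 0) ⊆
            insert i ((Finset.univ.filter (fun j => β j ≠ 0)).erase j₀) := by
          intro j hj
          simp only [Finset.mem_filter, Finset.mem_univ, true_and, Finset.mem_insert,
            Finset.mem_erase] at hj ⊢
          by_cases h1 : j = i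
          · exact Or.inl h1
          · by_cases h2 : j = j₀
            · exfalso; apply hj; subst h2; simp [hv, h1]
            · exact Or.inr ⟨h2, by rwa [hvj j h1 h2] at hj⟩
        have hjmem : j₀ ∈ Finset.univ.filter (fun j => β j ≠ 0) := by simp [hj₀ne]
        calc (Finset.univ.filter (fun j => v j ≠ 0)).card
            ≤ (insert i ((Finset.univ.filter (fun j => β j ≠ 0)).erase j₀)).card :=
              Finset.card_le_card hsub
          _ ≤ ((Finset.univ.filter (fun j => β j ≠ 0)).erase j₀).card + 1 :=
              Finset.card_insert_le _ _
          _ = s := by rw [Finset.card_erase_of_mem hjmem, hΓcard]; omega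
      have hle := h v hfeasv
      have hsum : ∑ j, (v j - w j) ^ 2
          = ∑ j, (β j - w j) ^ 2 - (α * g i) ^ 2 + (β j₀) ^ 2 := by
        have hj₀i : j₀ ∈ Finset.univ.erase i := Finset.mem_erase.mpr ⟨Ne.symm hij, Finset.mem_univ _⟩
        have h1 := Finset.sum_erase_add Finset.univ (fun j => (v j - w j) ^ 2) (Finset.mem_univ i)
        have h2 := Finset.sum_erase_add (Finset.univ.erase i) (fun j => (v j - w j) ^ 2) hj₀i
        have h1' := Finset.sum_erase_add Finset.univ (fun j => (β j - w j) ^ 2) (Finset.mem_univ i)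
        have h2' := Finset.sum_erase_add (Finset.univ.erase i) (fun j => (β j - w j) ^ 2) hj₀i
        have h3 : ∑ j ∈ (Finset.univ.erase i).erase j₀, (v j - w j) ^ 2
            = ∑ j ∈ (Finset.univ.erase i).erase j₀, (β j - w j) ^ 2 :=
          Finset.sum_congr rfl (fun j hj => by
            have hj1 := Finset.mem_erase.mp hj
            have hj2 := Finset.mem_erase.mp hj1.2
            rw [hvj j hj2.1 hj1.1])
        have h4 : (v i - w i) ^ 2 = 0 := by simp [hv]
        have h5 : (v j₀ - w j₀) ^ 2 = (β j₀) ^ 2 := by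
          have : v j₀ = 0 := by simp [hv, Ne.symm hij]
          rw [this, hw j₀, hgj₀]
          ring
        have h6 : (β i - w i) ^ 2 = (α * g i) ^ 2 := by rw [hbw i]
        have h7 : (β j₀ - w j₀) ^ 2 = 0 := by rw [hbw j₀, hgj₀]; ring
        simp only [h3, h4, h5, h6, h7] at h1 h2 h1' h2' ⊢
        linarith
      rw [hsum] at hle
      have h8 : (α * g i) ^ 2 ≤ (β j₀) ^ 2 := by linarith
      have h9 : |α * g i| ≤ |β j₀| := by
        have := Real.sqrt_le_sqrt h8
        rwa [Real.sqrt_sq_eq_abs, Real.sqrt_sq_eq_abs] at this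
      rw [hkthj₀]
      calc α * |g i| = |α * g i| := by rw [abs_mul, abs_of_pos hα]
        _ ≤ |β j₀| := h9
    · -- zeroNorm β < s → g = 0
      ext i
      exact claim i (Or.inr hlt)
  · intro hrhs v hv
    rcases lt_or_eq_of_le hfeas with hlt | heq
    · have hg := hrhs.2 hlt
      have h0 : ∀ i, β i - w i = 0 := by
        intro i
        rw [hbw i, hg]
        simp
      calc ∑ i, (β i - w i) ^ 2 = 0 := by simp [h0]
        _ ≤ ∑ i, (v i - w i) ^ 2 := Finset.sum_nonneg (fun i _ => sq_nonneg _)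
    · obtain ⟨hsupp, hoff⟩ := hrhs.1 heq
      obtain ⟨⟨j₀, hj₀ne, hkthj₀⟩, hminall⟩ := kth_eq_min hs hsp.le β heq
      have hm0 : 0 ≤ kthLargestAbs β s := hkthj₀ ▸ abs_nonneg _
      set Γ : Finset (Fin p) := Finset.univ.filter (fun i => β i ≠ 0) with hΓdef
      set T : Finset (Fin p) := Finset.univ.filter (fun i => v i ≠ 0) with hTdef
      have hTcard : T.card ≤ s := by rw [hTdef, ← zeroNorm_eq]; exact hv
      have hΓcard : Γ.card = s := by rw [hΓdef, ← zeroNorm_eq]; exact heq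
      have hSβ : ∑ i, (β i - w i) ^ 2 = ∑ i ∈ Γᶜ, w i ^ 2 := by
        rw [← Finset.sum_add_sum_compl Γ]
        have h1 : ∑ i ∈ Γ, (β i - w i) ^ 2 = 0 :=
          Finset.sum_eq_zero (fun i hi => by
            have hgi : g i = 0 := hsupp i (by simpa [hΓdef] using hi)
            rw [hbw i, hgi]; ring)
        have h2 : ∑ i ∈ Γᶜ, (β i - w i) ^ 2 = ∑ i ∈ Γᶜ, w i ^ 2 :=
          Finset.sum_congr rfl (fun i hi => by
            have hb : β i = 0 := by
              have := Finset.mem_compl.mp hi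
              simpa [hΓdef] using this
            rw [hb]; ring)
        rw [h1, h2, zero_add]
      have hSv : ∑ i ∈ Tᶜ, w i ^ 2 ≤ ∑ i, (v i - w i) ^ 2 := by
        have h1 : ∑ i ∈ Tᶜ, w i ^ 2 = ∑ i ∈ Tᶜ, (v i - w i) ^ 2 :=
          Finset.sum_congr rfl (fun i hi => by
            have hvi : v i = 0 := by
              have := Finset.mem_compl.mp hi
              simpa [hTdef] using this
            rw [hvi]; ring)
        rw [h1]
        exact Finset.sum_le_sum_of_subset_of_nonneg (Finset.subset_univ _)
          (fun i _ _ => sq_nonneg _)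
      have hmid : ∑ i ∈ Γᶜ, w i ^ 2 ≤ ∑ i ∈ Tᶜ, w i ^ 2 := by
        apply sum_compl_le (fun i => w i) (kthLargestAbs β s) Γ T (by omega)
        · intro i hi
          have hbi : β i ≠ 0 := by simpa [hΓdef] using hi
          have hgi : g i = 0 := hsupp i hbi
          have hwi : w i = β i := by rw [hw i, hgi]; ring
          have := hminall i hbi
          calc kthLargestAbs β s ^ 2 ≤ |β i| ^ 2 := pow_le_pow_left₀ hm0 this 2
            _ = w i ^ 2 := by rw [sq_abs, hwi]
        · intro i hi
          have hbi : β i = 0 := by simpa [hΓdef] using hi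
          have hwi : w i = -(α * g i) := by rw [hw i, hbi]; ring
          have := hoff i hbi
          calc w i ^ 2 = (α * |g i|) ^ 2 := by
                rw [hwi, neg_pow, mul_pow, mul_pow, sq_abs]
                ring
            _ ≤ kthLargestAbs β s ^ 2 := pow_le_pow_left₀ (by positivity) this 2
      linarith

end Aux

set_option maxHeartbeats 1000000 in
/-- for `ℓ ∈ {ℓ_log, ℓ_lin}` and `α > 0`, a feasible point `β* = (β₁*; β₂*)` is an
`α`-stationary point of the SCL problem iff for `j = 1, 2`: when `‖β_j*‖₀ = s_j`,
`(∇_{β_j}f(β*))_i = 0` on `Γ(β_j*)` and `α|(∇_{β_j}f(β*))_i| ≤ (β_j*)↓_{s_j}` off `Γ(β_j*)`;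
and when `‖β_j*‖₀ < s_j`, `∇_{β_j}f(β*) = 0`. -/
theorem scl_alpha_stationary_iff {n p₁ p₂ : ℕ} (hn : 0 < n)
    (X : Matrix (Fin n) (Fin p₁) ℝ) (Z : Matrix (Fin n) (Fin p₂) ℝ) (y : Fin n → ℝ)
    (s₁ s₂ : ℕ) (hs₁ : 0 < s₁) (hs₁p : s₁ < p₁) (hs₂ : 0 < s₂) (hs₂p : s₂ < p₂)
    (a b c : ℝ) (ha : 0 < a) (hb : 0 < b) (hc : 0 < c)
    (ℓ₁ : Matrix (Fin n) (Fin p₁) ℝ → (Fin n → ℝ) → EuclideanSpace ℝ (Fin p₁) → ℝ)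
    (ℓ₂ : Matrix (Fin n) (Fin p₂) ℝ → (Fin n → ℝ) → EuclideanSpace ℝ (Fin p₂) → ℝ)
    (hℓ : (ℓ₁ = ellLog ∧ ℓ₂ = ellLog) ∨ (ℓ₁ = ellLin ∧ ℓ₂ = ellLin))
    (f : EuclideanSpace ℝ (Fin (p₁ + p₂)) → ℝ)
    (hf : f = sclObj ℓ₁ ℓ₂ X Z y a b c)
    (α : ℝ) (hα : 0 < α)
    (βs : EuclideanSpace ℝ (Fin (p₁ + p₂)))
    (hfeas₁ : zeroNorm (part1 βs) ≤ s₁) (hfeas₂ : zeroNorm (part2 βs) ≤ s₂) :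
    alphaStat f s₁ s₂ α βs ↔
      ((zeroNorm (part1 βs) = s₁ →
          (∀ i, part1 βs i ≠ 0 → part1 (gradient f βs) i = 0) ∧
          (∀ i, part1 βs i = 0 →
            α * |part1 (gradient f βs) i| ≤ kthLargestAbs (part1 βs) s₁)) ∧
       (zeroNorm (part1 βs) < s₁ → part1 (gradient f βs) = 0) ∧
       (zeroNorm (part2 βs) = s₂ →
          (∀ i, part2 βs i ≠ 0 → part2 (gradient f βs) i = 0) ∧
          (∀ i, part2 βs i = 0 →
            α * |part2 (gradient f βs) i| ≤ kthLargestAbs (part2 βs) s₂)) ∧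
       (zeroNorm (part2 βs) < s₂ → part2 (gradient f βs) = 0)) := by
  have h1 := proj_sparse_iff hs₁ hs₁p hα (part1 βs) (part1 (gradient f βs)) hfeas₁
  have h2 := proj_sparse_iff hs₂ hs₂p hα (part2 βs) (part2 (gradient f βs)) hfeas₂
  rw [alphaStat, h1, h2]
  constructor
  · rintro ⟨⟨a1, b1⟩, ⟨a2, b2⟩⟩
    exact ⟨a1, b1, a2, b2⟩
  · rintro ⟨a1, b1, a2, b2⟩
    exact ⟨⟨a1, b1⟩, ⟨a2, b2⟩⟩
end

section
/- Let ℓ ∈ {ℓ_log, ℓ_lin} and let f be the SCL objective. If the matrix [X Z] ∈ ℝ^{n×(p₁+p₂)} is (s₁+s₂)-regular, then: (i) the SCL problem has a global minimizer; (ii) it has only finitely many local minimizers; and (iii) every local minimizer β* is a strict local minimizer: there exist δ > 0 and l_f > 0 (the (s₁+s₂)-restricted strong convexity parameter of f) such that f(β) ≥ f(β*) + (l_f/2)‖β − β*‖² for every feasible β with ‖β − β*‖ < δ; in particular β* is the unique minimizer of f over the feasible set intersected with that neighborhood. -/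
open Matrix Filter Topology Finset
open scoped RealInnerProductSpace

noncomputable section AUX

/-- softplus is convex -/
lemma aux_softplus_convex : ConvexOn ℝ Set.univ (fun t : ℝ => Real.log (1 + Real.exp t)) := by
  have hd : ∀ t : ℝ, HasDerivAt (fun t => Real.log (1 + Real.exp t))
      (Real.exp t / (1 + Real.exp t)) t := by
    intro t
    have h1 : HasDerivAt (fun t : ℝ => 1 + Real.exp t) (Real.exp t) t :=
      (Real.hasDerivAt_exp t).const_add 1
    simpa using h1.log (by positivity)
  have hdiff : Differentiable ℝ (fun t => Real.log (1 + Real.exp t)) :=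
    fun t => (hd t).differentiableAt
  apply Monotone.convexOn_univ_of_deriv hdiff
  have hderiv : deriv (fun t => Real.log (1 + Real.exp t))
      = fun t => Real.exp t / (1 + Real.exp t) := funext fun t => (hd t).deriv
  rw [hderiv]
  intro s t hst
  have h1 : (0:ℝ) < 1 + Real.exp s := by positivity
  have h2 : (0:ℝ) < 1 + Real.exp t := by positivity
  rw [div_le_div_iff₀ h1 h2]
  have h3 := Real.exp_le_exp.2 hst
  nlinarith [Real.exp_pos s, Real.exp_pos t]

lemma aux_log_term_convex (c : ℝ) :
    ConvexOn ℝ Set.univ (fun t : ℝ => Real.log (1 + Real.exp t) - c * t) := by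
  refine aux_softplus_convex.sub ⟨convex_univ, ?_⟩
  intro x _ y _ a b _ _ _
  simp only [smul_eq_mul]
  ring_nf
  exact le_refl _

lemma aux_sq_term_convex (c : ℝ) :
    ConvexOn ℝ Set.univ (fun t : ℝ => (c - t) ^ 2) := by
  refine ⟨convex_univ, ?_⟩
  intro x _ y _ a b ha hb hab
  simp only [smul_eq_mul]
  have hb' : b = 1 - a := by linarith
  subst hb'
  nlinarith [mul_nonneg (mul_nonneg ha hb) (sq_nonneg (x - y))]

end AUX
noncomputable section AUXSUPP

/-- support of a vector as a Finset -/
def suppF {m : ℕ} (β : EuclideanSpace ℝ (Fin m)) : Finset (Fin m) :=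
  @Finset.filter _ (fun i => β i ≠ 0) (Classical.decPred _) Finset.univ

lemma mem_suppF {m : ℕ} {β : EuclideanSpace ℝ (Fin m)} {i : Fin m} :
    i ∈ suppF β ↔ β i ≠ 0 := by
  classical
  simp [suppF]

lemma zeroNorm_eq_card_suppF {m : ℕ} (β : EuclideanSpace ℝ (Fin m)) :
    zeroNorm β = (suppF β).card := by
  rw [zeroNorm, show {i | β i ≠ 0} = ↑(suppF β) by ext i; simp [mem_suppF],
    Set.ncard_coe_finset]

/-- the coordinate subspace of vectors supported on `T` -/
def Vset {m : ℕ} (T : Finset (Fin m)) : Set (EuclideanSpace ℝ (Fin m)) :=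
  {β | ∀ i ∉ T, β i = 0}

lemma mem_Vset_iff_suppF_subset {m : ℕ} {T : Finset (Fin m)}
    {β : EuclideanSpace ℝ (Fin m)} : β ∈ Vset T ↔ suppF β ⊆ T := by
  constructor
  · intro h i hi
    by_contra hiT
    exact (mem_suppF.1 hi) (h i hiT)
  · intro h i hi
    by_contra h0
    exact hi (h (mem_suppF.2 h0))

lemma zero_mem_Vset {m : ℕ} (T : Finset (Fin m)) : (0 : EuclideanSpace ℝ (Fin m)) ∈ Vset T := by
  intro i _; rfl

lemma Vset_comb {m : ℕ} {T : Finset (Fin m)} {x y : EuclideanSpace ℝ (Fin m)} (a b : ℝ)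
    (hx : x ∈ Vset T) (hy : y ∈ Vset T) : a • x + b • y ∈ Vset T := by
  intro i hi
  have h1 : x i = 0 := hx i hi
  have h2 : y i = 0 := hy i hi
  simp [PiLp.add_apply, PiLp.smul_apply, h1, h2]

lemma Vset_sub {m : ℕ} {T : Finset (Fin m)} {x y : EuclideanSpace ℝ (Fin m)}
    (hx : x ∈ Vset T) (hy : y ∈ Vset T) : x - y ∈ Vset T := by
  intro i hi
  have h1 : x i = 0 := hx i hi
  have h2 : y i = 0 := hy i hi
  simp [PiLp.sub_apply, h1, h2]

lemma Vset_smul {m : ℕ} {T : Finset (Fin m)} {x : EuclideanSpace ℝ (Fin m)} (a : ℝ)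
    (hx : x ∈ Vset T) : a • x ∈ Vset T := by
  intro i hi
  have h1 : x i = 0 := hx i hi
  simp [PiLp.smul_apply, h1]

lemma isClosed_Vset {m : ℕ} (T : Finset (Fin m)) : IsClosed (Vset T) := by
  have : Vset T = ⋂ (i : Fin m), ⋂ (_ : i ∉ T), {β : EuclideanSpace ℝ (Fin m) | β i = 0} := by
    ext β; simp [Vset, Set.mem_iInter]
  rw [this]
  exact isClosed_iInter fun i => isClosed_iInter fun _ =>
    isClosed_eq (EuclideanSpace.proj i).continuous continuous_const

lemma euclid_norm_sq {m : ℕ} (v : EuclideanSpace ℝ (Fin m)) : ‖v‖ ^ 2 = ∑ i, v i ^ 2 := by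
  rw [EuclideanSpace.norm_eq, Real.sq_sqrt (by positivity)]
  simp [Real.norm_eq_abs, sq_abs]

lemma euclid_coord_le_norm {m : ℕ} (v : EuclideanSpace ℝ (Fin m)) (i : Fin m) :
    |v i| ≤ ‖v‖ := by
  have h1 : (v i) ^ 2 ≤ ‖v‖ ^ 2 := by
    rw [euclid_norm_sq]
    exact Finset.single_le_sum (f := fun j => v j ^ 2) (fun j _ => sq_nonneg _) (mem_univ i)
  have h2 : |v i| ^ 2 ≤ ‖v‖ ^ 2 := by rwa [sq_abs]
  exact abs_le_of_sq_le_sq' (by nlinarith [abs_nonneg (v i), norm_nonneg v]) (norm_nonneg v) |>.2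

end AUXSUPP
noncomputable section AUXFEAS

/-- admissible supports -/
def okT (p₁ p₂ s₁ s₂ : ℕ) (T : Finset (Fin (p₁ + p₂))) : Prop :=
  (T.filter (fun i : Fin (p₁ + p₂) => (i : ℕ) < p₁)).card ≤ s₁ ∧
  (T.filter (fun i : Fin (p₁ + p₂) => ¬ (i : ℕ) < p₁)).card ≤ s₂

lemma card_suppF_part1 {p₁ p₂ : ℕ} (β : EuclideanSpace ℝ (Fin (p₁ + p₂))) :
    (suppF (part1 β)).card = ((suppF β).filter (fun i : Fin (p₁ + p₂) => (i : ℕ) < p₁)).card := by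
  apply Finset.card_bij (fun i _ => Fin.castAdd p₂ i)
  · intro i hi
    rw [Finset.mem_filter]
    refine ⟨mem_suppF.2 ?_, by simp⟩
    exact (mem_suppF (β := part1 β)).1 hi
  · intro i _ j _ h
    have : (Fin.castAdd p₂ i : ℕ) = (Fin.castAdd p₂ j : ℕ) := by rw [h]
    simpa [Fin.ext_iff] using this
  · intro k hk
    rw [Finset.mem_filter] at hk
    obtain ⟨hk0, hklt⟩ := hk
    refine ⟨⟨(k : ℕ), hklt⟩, ?_, ?_⟩
    · apply mem_suppF.2
      have : Fin.castAdd p₂ ⟨(k : ℕ), hklt⟩ = k := by simp [Fin.ext_iff]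
      show β (Fin.castAdd p₂ ⟨(k : ℕ), hklt⟩) ≠ 0
      rw [this]; exact mem_suppF.1 hk0
    · simp [Fin.ext_iff]

lemma card_suppF_part2 {p₁ p₂ : ℕ} (β : EuclideanSpace ℝ (Fin (p₁ + p₂))) :
    (suppF (part2 β)).card = ((suppF β).filter (fun i : Fin (p₁ + p₂) => ¬ (i : ℕ) < p₁)).card := by
  apply Finset.card_bij (fun i _ => Fin.natAdd p₁ i)
  · intro i hi
    rw [Finset.mem_filter]
    refine ⟨mem_suppF.2 ?_, by simp⟩
    exact (mem_suppF (β := part2 β)).1 hi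
  · intro i _ j _ h
    have : (Fin.natAdd p₁ i : ℕ) = (Fin.natAdd p₁ j : ℕ) := by rw [h]
    simp only [Fin.coe_natAdd] at this
    simpa [Fin.ext_iff] using this
  · intro k hk
    rw [Finset.mem_filter] at hk
    obtain ⟨hk0, hklt⟩ := hk
    push_neg at hklt
    have hk2 : (k : ℕ) - p₁ < p₂ := by omega
    refine ⟨⟨(k : ℕ) - p₁, hk2⟩, ?_, ?_⟩
    · apply mem_suppF.2
      have : Fin.natAdd p₁ ⟨(k : ℕ) - p₁, hk2⟩ = k := by simp [Fin.ext_iff]; omega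
      show β (Fin.natAdd p₁ ⟨(k : ℕ) - p₁, hk2⟩) ≠ 0
      rw [this]; exact mem_suppF.1 hk0
    · simp [Fin.ext_iff]; omega

lemma mem_feas_iff_okT {p₁ p₂ s₁ s₂ : ℕ} (β : EuclideanSpace ℝ (Fin (p₁ + p₂))) :
    β ∈ feas p₁ p₂ s₁ s₂ ↔ okT p₁ p₂ s₁ s₂ (suppF β) := by
  unfold feas okT
  rw [Set.mem_setOf_eq, zeroNorm_eq_card_suppF, zeroNorm_eq_card_suppF,
    card_suppF_part1, card_suppF_part2]

lemma Vset_subset_feas {p₁ p₂ s₁ s₂ : ℕ} {T : Finset (Fin (p₁ + p₂))}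
    (hT : okT p₁ p₂ s₁ s₂ T) : Vset T ⊆ feas p₁ p₂ s₁ s₂ := by
  intro β hβ
  rw [mem_feas_iff_okT]
  have hsub := mem_Vset_iff_suppF_subset.1 hβ
  exact ⟨le_trans (Finset.card_le_card (Finset.filter_subset_filter _ hsub)) hT.1,
    le_trans (Finset.card_le_card (Finset.filter_subset_filter _ hsub)) hT.2⟩

lemma card_le_of_okT {p₁ p₂ s₁ s₂ : ℕ} {T : Finset (Fin (p₁ + p₂))}
    (hT : okT p₁ p₂ s₁ s₂ T) : T.card ≤ s₁ + s₂ := by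
  have key : (T.filter (fun i : Fin (p₁ + p₂) => (i : ℕ) < p₁)).card +
      (T.filter (fun i : Fin (p₁ + p₂) => ¬ (i : ℕ) < p₁)).card = T.card :=
    Finset.card_filter_add_card_filter_not _
  obtain ⟨h1, h2⟩ := hT
  omega

lemma okT_empty {p₁ p₂ s₁ s₂ : ℕ} : okT p₁ p₂ s₁ s₂ ∅ := by
  constructor <;> simp

end AUXFEAS
noncomputable section AUXW

/-- coupled linear map `β ↦ Xβ₁ − Zβ₂`, coordinatewise. -/
def Wmap {n p₁ p₂ : ℕ} (X : Matrix (Fin n) (Fin p₁) ℝ) (Z : Matrix (Fin n) (Fin p₂) ℝ)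
    (β : EuclideanSpace ℝ (Fin (p₁ + p₂))) (i : Fin n) : ℝ :=
  X.mulVec (part1 β) i - Z.mulVec (part2 β) i

lemma sum_mul_comb {n p : ℕ} (M : Matrix (Fin n) (Fin p) ℝ) (i : Fin n) (a b : ℝ)
    (u v : Fin p → ℝ) :
    ∑ j, M i j * (a * u j + b * v j) = a * ∑ j, M i j * u j + b * ∑ j, M i j * v j := by
  rw [Finset.mul_sum, Finset.mul_sum, ← Finset.sum_add_distrib]
  exact Finset.sum_congr rfl fun j _ => by ring

lemma Wmap_comb {n p₁ p₂ : ℕ} (X : Matrix (Fin n) (Fin p₁) ℝ) (Z : Matrix (Fin n) (Fin p₂) ℝ)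
    (a b : ℝ) (x y : EuclideanSpace ℝ (Fin (p₁ + p₂))) (i : Fin n) :
    Wmap X Z (a • x + b • y) i = a * Wmap X Z x i + b * Wmap X Z y i := by
  have h1 : ∀ j, part1 (a • x + b • y) j = a * part1 x j + b * part1 y j := by
    intro j; simp [part1, PiLp.add_apply, PiLp.smul_apply]
  have h2 : ∀ j, part2 (a • x + b • y) j = a * part2 x j + b * part2 y j := by
    intro j; simp [part2, PiLp.add_apply, PiLp.smul_apply]
  unfold Wmap Matrix.mulVec dotProduct
  simp only [h1, h2]
  rw [sum_mul_comb, sum_mul_comb]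
  ring

lemma Wmap_sub {n p₁ p₂ : ℕ} (X : Matrix (Fin n) (Fin p₁) ℝ) (Z : Matrix (Fin n) (Fin p₂) ℝ)
    (x y : EuclideanSpace ℝ (Fin (p₁ + p₂))) (i : Fin n) :
    Wmap X Z (x - y) i = Wmap X Z x i - Wmap X Z y i := by
  have h1 : ∀ j, part1 (x - y) j = 1 * part1 x j + (-1) * part1 y j := by
    intro j; simp [part1, PiLp.sub_apply]; ring
  have h2 : ∀ j, part2 (x - y) j = 1 * part2 x j + (-1) * part2 y j := by
    intro j; simp [part2, PiLp.sub_apply]; ring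
  unfold Wmap Matrix.mulVec dotProduct
  simp only [h1, h2]
  rw [sum_mul_comb, sum_mul_comb]
  ring

lemma Wmap_smul {n p₁ p₂ : ℕ} (X : Matrix (Fin n) (Fin p₁) ℝ) (Z : Matrix (Fin n) (Fin p₂) ℝ)
    (a : ℝ) (x : EuclideanSpace ℝ (Fin (p₁ + p₂))) (i : Fin n) :
    Wmap X Z (a • x) i = a * Wmap X Z x i := by
  have h1 : ∀ j, part1 (a • x) j = a * part1 x j + 0 * part1 x j := by
    intro j; simp [part1, PiLp.smul_apply]
  have h2 : ∀ j, part2 (a • x) j = a * part2 x j + 0 * part2 x j := by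
    intro j; simp [part2, PiLp.smul_apply]
  unfold Wmap Matrix.mulVec dotProduct
  simp only [h1, h2]
  rw [sum_mul_comb, sum_mul_comb]
  ring

/-- restricted injectivity of `Wmap` from `(s₁+s₂)`-regularity -/
lemma Wmap_inj {n p₁ p₂ s₁ s₂ : ℕ} (X : Matrix (Fin n) (Fin p₁) ℝ)
    (Z : Matrix (Fin n) (Fin p₂) ℝ) (hs : s₁ + s₂ ≤ p₁ + p₂)
    (hreg : sRegular (Matrix.of fun i => Fin.append (X i) (Z i)) (s₁ + s₂))
    (T : Finset (Fin (p₁ + p₂))) (hT : T.card ≤ s₁ + s₂)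
    (v : EuclideanSpace ℝ (Fin (p₁ + p₂))) (hv : v ∈ Vset T)
    (hW : ∀ i, Wmap X Z v i = 0) : v = 0 := by
  classical
  set M : Matrix (Fin n) (Fin (p₁ + p₂)) ℝ := Matrix.of fun i => Fin.append (X i) (Z i) with hM
  obtain ⟨T', hTT', _, hcard⟩ := Finset.exists_subsuperset_card_eq (T.subset_univ) hT
    (by simpa [Finset.card_univ] using hs)
  set u : Fin (p₁ + p₂) → ℝ := fun k => if (k : ℕ) < p₁ then v k else -(v k) with hu
  have hMu : ∀ i, ∑ k, u k * Mᵀ k i = 0 := by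
    intro i
    have hsplit : ∑ k, u k * Mᵀ k i =
        (∑ j : Fin p₁, u (Fin.castAdd p₂ j) * M i (Fin.castAdd p₂ j)) +
        (∑ j : Fin p₂, u (Fin.natAdd p₁ j) * M i (Fin.natAdd p₁ j)) := by
      rw [Fin.sum_univ_add (f := fun k => u k * Mᵀ k i)]
      simp only [Matrix.transpose_apply]
    rw [hsplit]
    have e1 : ∀ j : Fin p₁, u (Fin.castAdd p₂ j) * M i (Fin.castAdd p₂ j)
        = X i j * part1 v j := by
      intro j
      have : u (Fin.castAdd p₂ j) = v (Fin.castAdd p₂ j) := by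
        simp [hu, Fin.coe_castAdd, j.isLt]
      rw [this, hM]
      simp [Fin.append_left, part1]
      ring
    have e2 : ∀ j : Fin p₂, u (Fin.natAdd p₁ j) * M i (Fin.natAdd p₁ j)
        = -(Z i j * part2 v j) := by
      intro j
      have : u (Fin.natAdd p₁ j) = -(v (Fin.natAdd p₁ j)) := by
        simp [hu, Fin.coe_natAdd]
      rw [this, hM]
      simp [Fin.append_right, part2]
      ring
    rw [Finset.sum_congr rfl fun j _ => e1 j, Finset.sum_congr rfl fun j _ => e2 j]
    have := hW i
    unfold Wmap Matrix.mulVec dotProduct at this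
    simp only [Finset.sum_neg_distrib]
    rw [Finset.sum_congr rfl (fun j _ => mul_comm (X i j) (part1 v j)),
      Finset.sum_congr rfl (fun j _ => mul_comm (Z i j) (part2 v j))] at this ⊢
    linarith [this]
  have hzero_out : ∀ k, k ∉ T' → u k = 0 := by
    intro k hk
    have : v k = 0 := hv k (fun hkT => hk (hTT' hkT))
    simp [hu, this]
  have hli := hreg T' hcard
  have hsum : ∑ j : {x // x ∈ T'}, u j.1 • Mᵀ j.1 = 0 := by
    have h1 : ∑ j : {x // x ∈ T'}, u j.1 • Mᵀ j.1 = ∑ k ∈ T', u k • Mᵀ k :=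
      (Finset.sum_attach T' fun k => u k • Mᵀ k)
    rw [h1]
    have h2 : ∑ k ∈ T', u k • Mᵀ k = ∑ k, u k • Mᵀ k := by
      apply Finset.sum_subset (T'.subset_univ)
      intro k _ hk
      rw [hzero_out k hk, zero_smul]
    rw [h2]
    funext i
    simpa [Finset.sum_apply, Pi.smul_apply, smul_eq_mul] using hMu i
  have hz := Fintype.linearIndependent_iff.1 hli (fun j => u j.1) hsum
  have huz : ∀ k, u k = 0 := by
    intro k
    by_cases hk : k ∈ T'
    · exact hz ⟨k, hk⟩
    · exact hzero_out k hk
  ext k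
  have := huz k
  by_cases hk : (k : ℕ) < p₁ <;> simp [hu, hk] at this <;> simpa using this

end AUXW
noncomputable section AUXMOD

lemma continuous_Wmap_coord {n p₁ p₂ : ℕ} (X : Matrix (Fin n) (Fin p₁) ℝ)
    (Z : Matrix (Fin n) (Fin p₂) ℝ) (i : Fin n) :
    Continuous (fun β : EuclideanSpace ℝ (Fin (p₁ + p₂)) => Wmap X Z β i) := by
  unfold Wmap Matrix.mulVec dotProduct part1 part2
  apply Continuous.sub
  · exact continuous_finset_sum _ fun j _ => continuous_const.mul
      ((EuclideanSpace.proj (Fin.castAdd p₂ j)).continuous)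
  · exact continuous_finset_sum _ fun j _ => continuous_const.mul
      ((EuclideanSpace.proj (Fin.natAdd p₁ j)).continuous)

lemma continuous_Qmap {n p₁ p₂ : ℕ} (X : Matrix (Fin n) (Fin p₁) ℝ)
    (Z : Matrix (Fin n) (Fin p₂) ℝ) :
    Continuous (fun β : EuclideanSpace ℝ (Fin (p₁ + p₂)) => ∑ i, (Wmap X Z β i) ^ 2) :=
  continuous_finset_sum _ fun i _ => (continuous_Wmap_coord X Z i).pow 2

/-- the restricted strong-convexity modulus of the quadratic coupling term -/
lemma exists_modulus {n p₁ p₂ s₁ s₂ : ℕ} (X : Matrix (Fin n) (Fin p₁) ℝ)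
    (Z : Matrix (Fin n) (Fin p₂) ℝ) (hs : s₁ + s₂ ≤ p₁ + p₂)
    (hreg : sRegular (Matrix.of fun i => Fin.append (X i) (Z i)) (s₁ + s₂))
    (T : Finset (Fin (p₁ + p₂))) (hT : T.card ≤ s₁ + s₂) :
    ∃ m > 0, ∀ v ∈ Vset T, m * ‖v‖ ^ 2 ≤ ∑ i, (Wmap X Z v i) ^ 2 := by
  classical
  set Q : EuclideanSpace ℝ (Fin (p₁ + p₂)) → ℝ := fun v => ∑ i, (Wmap X Z v i) ^ 2 with hQ
  have hQ0 : ∀ v, 0 ≤ Q v := fun v => Finset.sum_nonneg fun i _ => sq_nonneg _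
  have hQsmul : ∀ (t : ℝ) v, Q (t • v) = t ^ 2 * Q v := by
    intro t v
    rw [hQ, Finset.mul_sum]
    exact Finset.sum_congr rfl fun i _ => by rw [Wmap_smul]; ring
  set K : Set (EuclideanSpace ℝ (Fin (p₁ + p₂))) := Vset T ∩ Metric.sphere 0 1 with hK
  have hKc : IsCompact K := by
    apply Metric.isCompact_of_isClosed_isBounded
    · exact (isClosed_Vset T).inter Metric.isClosed_sphere
    · exact Metric.isBounded_sphere.subset Set.inter_subset_right
  by_cases hne : K.Nonempty
  · obtain ⟨v₀, hv₀K, hmin⟩ := hKc.exists_isMinOn hne ((continuous_Qmap X Z).continuousOn)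
    have hv₀V : v₀ ∈ Vset T := hv₀K.1
    have hv₀n : ‖v₀‖ = 1 := by
      have := hv₀K.2
      rwa [mem_sphere_zero_iff_norm] at this
    have hm : 0 < Q v₀ := by
      rcases lt_or_eq_of_le (hQ0 v₀) with h | h
      · exact h
      · exfalso
        have hWz : ∀ i, Wmap X Z v₀ i = 0 := by
          intro i
          have := (Finset.sum_eq_zero_iff_of_nonneg (fun i _ => sq_nonneg (Wmap X Z v₀ i))).1
            h.symm i (Finset.mem_univ i)
          exact pow_eq_zero_iff (by norm_num) |>.1 this
        have := Wmap_inj X Z hs hreg T hT v₀ hv₀V hWz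
        rw [this] at hv₀n
        simp at hv₀n
    refine ⟨Q v₀, hm, ?_⟩
    intro v hvV
    by_cases hv0 : v = 0
    · subst hv0
      have h0 : Q 0 = 0 := by simpa using hQsmul 0 0
      have : Q v₀ * ‖(0 : EuclideanSpace ℝ (Fin (p₁ + p₂)))‖ ^ 2 = 0 := by simp
      rw [this, ← h0]
    · have hnv : 0 < ‖v‖ := norm_pos_iff.2 hv0
      set w := ‖v‖⁻¹ • v with hw
      have hwK : w ∈ K := by
        constructor
        · exact Vset_smul _ hvV
        · rw [mem_sphere_zero_iff_norm, hw, norm_smul]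
          simp [abs_of_nonneg (inv_nonneg.2 (norm_nonneg v)), inv_mul_cancel₀ (ne_of_gt hnv)]
      have h1 : Q v₀ ≤ Q w := hmin hwK
      have h2 : Q w = (‖v‖⁻¹) ^ 2 * Q v := hQsmul _ v
      rw [h2] at h1
      have h3 : Q v₀ * ‖v‖ ^ 2 ≤ Q v := by
        have hp2 : (0:ℝ) < ‖v‖ ^ 2 := pow_pos hnv 2
        have := mul_le_mul_of_nonneg_right h1 (le_of_lt hp2)
        calc Q v₀ * ‖v‖ ^ 2 ≤ (‖v‖⁻¹) ^ 2 * Q v * ‖v‖ ^ 2 := this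
          _ = Q v := by field_simp
      linarith [h3]
  · refine ⟨1, one_pos, ?_⟩
    intro v hvV
    have hv0 : v = 0 := by
      by_contra hv0
      have hnv : 0 < ‖v‖ := norm_pos_iff.2 hv0
      apply hne
      refine ⟨‖v‖⁻¹ • v, Vset_smul _ hvV, ?_⟩
      rw [mem_sphere_zero_iff_norm, norm_smul]
      simp [abs_of_nonneg (inv_nonneg.2 (norm_nonneg v)), inv_mul_cancel₀ (ne_of_gt hnv)]
    subst hv0
    simpa using hQ0 0

end AUXMOD
noncomputable section AUXSC

lemma comb_sq (a b s t : ℝ) (hab : a + b = 1) :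
    (a * s + b * t) ^ 2 = a * s ^ 2 + b * t ^ 2 - a * b * (s - t) ^ 2 := by
  have hb' : b = 1 - a := by linarith
  subst hb'; ring

/-- strong convexity of the objective on a coordinate subspace -/
lemma f_SC {n p₁ p₂ : ℕ} (X : Matrix (Fin n) (Fin p₁) ℝ) (Z : Matrix (Fin n) (Fin p₂) ℝ)
    (g f : EuclideanSpace ℝ (Fin (p₁ + p₂)) → ℝ) (κ : ℝ) (hκ : 0 < κ)
    (hfq : ∀ β, f β = g β + κ * ∑ i, (Wmap X Z β i) ^ 2)
    (hg : ∀ x y : EuclideanSpace ℝ (Fin (p₁ + p₂)), ∀ a b : ℝ, 0 ≤ a → 0 ≤ b → a + b = 1 →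
      g (a • x + b • y) ≤ a * g x + b * g y)
    (T : Finset (Fin (p₁ + p₂))) (m₀ : ℝ)
    (hm₀ : ∀ v ∈ Vset T, m₀ * ‖v‖ ^ 2 ≤ ∑ i, (Wmap X Z v i) ^ 2) :
    ∀ x ∈ Vset T, ∀ y ∈ Vset T, ∀ a b : ℝ, 0 ≤ a → 0 ≤ b → a + b = 1 →
      f (a • x + b • y) ≤ a * f x + b * f y - a * b * (κ * m₀) * ‖x - y‖ ^ 2 := by
  intro x hx y hy a b ha hb hab
  have hQcomb : ∑ i, (Wmap X Z (a • x + b • y) i) ^ 2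
      = a * ∑ i, (Wmap X Z x i) ^ 2 + b * ∑ i, (Wmap X Z y i) ^ 2
        - a * b * ∑ i, (Wmap X Z (x - y) i) ^ 2 := by
    rw [Finset.mul_sum, Finset.mul_sum, Finset.mul_sum, ← Finset.sum_add_distrib,
      ← Finset.sum_sub_distrib]
    apply Finset.sum_congr rfl
    intro i _
    rw [Wmap_comb, Wmap_sub, comb_sq _ _ _ _ hab]
  have hQlow : m₀ * ‖x - y‖ ^ 2 ≤ ∑ i, (Wmap X Z (x - y) i) ^ 2 :=
    hm₀ _ (Vset_sub hx hy)
  have hgc := hg x y a b ha hb hab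
  have hab0 : 0 ≤ a * b := mul_nonneg ha hb
  rw [hfq, hfq, hfq, hQcomb]
  have h1 : a * b * (m₀ * ‖x - y‖ ^ 2) ≤ a * b * ∑ i, (Wmap X Z (x - y) i) ^ 2 :=
    mul_le_mul_of_nonneg_left hQlow hab0
  nlinarith [h1, hgc, hκ, mul_le_mul_of_nonneg_left h1 hκ.le]

/-- a local minimizer on a coordinate subspace of a strongly convex function satisfies
quadratic growth -/
lemma growth {m' : ℕ} (f : EuclideanSpace ℝ (Fin m') → ℝ) (T : Finset (Fin m')) (m : ℝ)
    (hm : 0 ≤ m)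
    (hsc : ∀ x ∈ Vset T, ∀ y ∈ Vset T, ∀ a b : ℝ, 0 ≤ a → 0 ≤ b → a + b = 1 →
      f (a • x + b • y) ≤ a * f x + b * f y - a * b * m * ‖x - y‖ ^ 2)
    (xs : EuclideanSpace ℝ (Fin m')) (hxs : xs ∈ Vset T)
    (hloc : IsLocalMinOn f (Vset T) xs) :
    ∀ y ∈ Vset T, f xs + m / 2 * ‖y - xs‖ ^ 2 ≤ f y := by
  have hglob : ∀ y ∈ Vset T, f xs ≤ f y := by
    intro y hy
    obtain ⟨ε, hε, hball⟩ := Metric.mem_nhdsWithin_iff.1 hloc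
    set N := ‖y - xs‖ with hN
    have hN0 : 0 ≤ N := norm_nonneg _
    set t : ℝ := min (1/2) (ε / (2 * (N + 1))) with ht
    have ht0 : 0 < t := by
      apply lt_min (by norm_num)
      positivity
    have ht2 : t ≤ 1/2 := min_le_left _ _
    set z := (1 - t) • xs + t • y with hz
    have hzV : z ∈ Vset T := Vset_comb _ _ hxs hy
    have hzxs : z - xs = t • (y - xs) := by
      rw [hz]; module
    have hdist : dist z xs < ε := by
      rw [dist_eq_norm, hzxs, norm_smul, Real.norm_eq_abs, abs_of_pos ht0]
      have h1 : t ≤ ε / (2 * (N + 1)) := min_le_right _ _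
      have h2 : t * N ≤ ε / (2 * (N + 1)) * N := mul_le_mul_of_nonneg_right h1 hN0
      have h3 : ε / (2 * (N + 1)) * N < ε := by
        rw [div_mul_eq_mul_div, div_lt_iff₀ (by positivity)]
        nlinarith
      exact lt_of_le_of_lt h2 h3
    have hfz : f xs ≤ f z := hball ⟨Metric.mem_ball.2 hdist, hzV⟩
    have hcomb := hsc xs hxs y hy (1 - t) t (by linarith) ht0.le (by ring)
    rw [← hz] at hcomb
    have hS : 0 ≤ ‖xs - y‖ ^ 2 := sq_nonneg _
    nlinarith [mul_nonneg (mul_nonneg (by linarith : (0:ℝ) ≤ 1 - t) hm) hS]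
  intro y hy
  set mid := (1/2 : ℝ) • xs + (1/2 : ℝ) • y with hmid
  have hmidV : mid ∈ Vset T := Vset_comb _ _ hxs hy
  have h1 : f xs ≤ f mid := hglob mid hmidV
  have h2 := hsc xs hxs y hy (1/2) (1/2) (by norm_num) (by norm_num) (by norm_num)
  rw [← hmid] at h2
  rw [show ‖y - xs‖ = ‖xs - y‖ from norm_sub_rev y xs]
  nlinarith [h1, h2]

/-- existence of a global minimizer on a coordinate subspace -/
lemma exists_min_V {m' : ℕ} (f : EuclideanSpace ℝ (Fin m') → ℝ) (hfc : Continuous f)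
    (T : Finset (Fin m')) (m : ℝ) (hm : 0 < m)
    (hsc : ∀ x ∈ Vset T, ∀ y ∈ Vset T, ∀ a b : ℝ, 0 ≤ a → 0 ≤ b → a + b = 1 →
      f (a • x + b • y) ≤ a * f x + b * f y - a * b * m * ‖x - y‖ ^ 2) :
    ∃ x ∈ Vset T, ∀ y ∈ Vset T, f x ≤ f y := by
  have h0V := zero_mem_Vset T
  have hK1 : IsCompact (Vset T ∩ Metric.closedBall 0 1) :=
    (isCompact_closedBall (0 : EuclideanSpace ℝ (Fin m')) 1).inter_left (isClosed_Vset T)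
  obtain ⟨w, hwK, hwmin⟩ := hK1.exists_isMinOn ⟨0, h0V, Metric.mem_closedBall_self zero_le_one⟩
    hfc.continuousOn
  have hw0 : f w ≤ f 0 := hwmin ⟨h0V, Metric.mem_closedBall_self zero_le_one⟩
  set R : ℝ := 1 + (2 / m) * (f 0 - f w) with hR
  have hR1 : (1:ℝ) ≤ R := by
    have h0 : 0 ≤ (2 / m) * (f 0 - f w) := mul_nonneg (by positivity) (by linarith)
    rw [hR]
    linarith
  have hKR : IsCompact (Vset T ∩ Metric.closedBall 0 R) :=
    (isCompact_closedBall (0 : EuclideanSpace ℝ (Fin m')) R).inter_left (isClosed_Vset T)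
  obtain ⟨x₀, hx₀K, hx₀min⟩ := hKR.exists_isMinOn
    ⟨0, h0V, Metric.mem_closedBall_self (by linarith)⟩ hfc.continuousOn
  have hx₀0 : f x₀ ≤ f 0 := hx₀min ⟨h0V, Metric.mem_closedBall_self (by linarith)⟩
  refine ⟨x₀, hx₀K.1, ?_⟩
  intro y hy
  by_cases hyR : ‖y‖ ≤ R
  · exact hx₀min ⟨hy, by rwa [Metric.mem_closedBall, dist_zero_right]⟩
  · push_neg at hyR
    set s := ‖y‖ with hs
    have hs1 : 1 < s := lt_of_le_of_lt hR1 hyR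
    have hs0 : 0 < s := by linarith
    set t : ℝ := s⁻¹ with ht
    have hts : t * s = 1 := inv_mul_cancel₀ (ne_of_gt hs0)
    have ht0 : 0 < t := inv_pos.2 hs0
    have ht1 : t < 1 := by
      rw [ht]
      exact inv_lt_one_of_one_lt₀ hs1
    set z := (1 - t) • (0 : EuclideanSpace ℝ (Fin m')) + t • y with hz
    have hzty : z = t • y := by rw [hz]; module
    have hzV : z ∈ Vset T := Vset_comb _ _ h0V hy
    have hzn : ‖z‖ = 1 := by
      rw [hzty, norm_smul, Real.norm_eq_abs, abs_of_pos ht0, ← hs, hts]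
    have hfwz : f w ≤ f z := hwmin ⟨hzV, by rw [Metric.mem_closedBall, dist_zero_right, hzn]⟩
    have hcomb := hsc 0 h0V y hy (1 - t) t (by linarith) ht0.le (by ring)
    rw [← hz] at hcomb
    have hn0y : ‖(0 : EuclideanSpace ℝ (Fin m')) - y‖ = s := by
      rw [zero_sub, norm_neg]
    rw [hn0y] at hcomb
    have hkey : 2 * (f 0 - f w) ≤ m * (s - 1) := by
      have h1 : s - 1 > (2 / m) * (f 0 - f w) := by
        rw [hR] at hyR
        linarith
      have h2 := mul_lt_mul_of_pos_left h1 hm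
      calc 2 * (f 0 - f w) = m * ((2 / m) * (f 0 - f w)) := by field_simp
        _ ≤ m * (s - 1) := by linarith [h2]
    -- multiply hcomb by s and combine
    suffices h : f 0 ≤ f y by linarith
    have h5 := mul_le_mul_of_nonneg_left hcomb hs0.le
    have e : s * ((1 - t) * f 0 + t * f y - (1 - t) * t * m * s ^ 2)
        = (s - 1) * f 0 + f y - m * s * (s - 1) := by
      rw [ht]
      field_simp
    rw [e] at h5
    have h6 := mul_le_mul_of_nonneg_left hfwz hs0.le
    nlinarith [h5, h6, mul_le_mul_of_nonneg_left hkey hs0.le,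
      mul_le_mul_of_nonneg_left hw0 hs0.le]
end AUXSC
noncomputable section AUXLOSS

lemma mulVec_coord_comb {n p : ℕ} (M : Matrix (Fin n) (Fin p) ℝ) (a b : ℝ)
    (u v : EuclideanSpace ℝ (Fin p)) (i : Fin n) :
    M.mulVec (WithLp.ofLp (a • u + b • v)) i = a * M.mulVec u i + b * M.mulVec v i := by
  have h1 : ∀ j, (a • u + b • v) j = a * u j + b * v j := by
    intro j; simp [PiLp.add_apply, PiLp.smul_apply]
  unfold Matrix.mulVec dotProduct
  simp only [h1]
  rw [sum_mul_comb]

lemma ellLog_convex_ineq {n p : ℕ} (X : Matrix (Fin n) (Fin p) ℝ) (y : Fin n → ℝ)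
    (u v : EuclideanSpace ℝ (Fin p)) (a b : ℝ) (ha : 0 ≤ a) (hb : 0 ≤ b) (hab : a + b = 1) :
    ellLog X y (a • u + b • v) ≤ a * ellLog X y u + b * ellLog X y v := by
  unfold ellLog
  rw [Finset.mul_sum, Finset.mul_sum, ← Finset.sum_add_distrib]
  apply Finset.sum_le_sum
  intro i _
  rw [mulVec_coord_comb]
  have := (aux_log_term_convex (y i)).2 (Set.mem_univ (X.mulVec u i))
    (Set.mem_univ (X.mulVec v i)) ha hb hab
  simpa [smul_eq_mul, mul_add, mul_sub] using this

lemma ellLin_convex_ineq {n p : ℕ} (X : Matrix (Fin n) (Fin p) ℝ) (y : Fin n → ℝ)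
    (u v : EuclideanSpace ℝ (Fin p)) (a b : ℝ) (ha : 0 ≤ a) (hb : 0 ≤ b) (hab : a + b = 1) :
    ellLin X y (a • u + b • v) ≤ a * ellLin X y u + b * ellLin X y v := by
  unfold ellLin
  have key : ∑ i, (y i - X.mulVec (WithLp.ofLp (a • u + b • v)) i) ^ 2
      ≤ a * ∑ i, (y i - X.mulVec u i) ^ 2 + b * ∑ i, (y i - X.mulVec v i) ^ 2 := by
    rw [Finset.mul_sum, Finset.mul_sum, ← Finset.sum_add_distrib]
    apply Finset.sum_le_sum
    intro i _
    rw [mulVec_coord_comb]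
    have := (aux_sq_term_convex (y i)).2 (Set.mem_univ (X.mulVec u i))
      (Set.mem_univ (X.mulVec v i)) ha hb hab
    simpa [smul_eq_mul] using this
  linarith

lemma continuous_mulVec_coord {n p : ℕ} (M : Matrix (Fin n) (Fin p) ℝ) (i : Fin n) :
    Continuous (fun β : EuclideanSpace ℝ (Fin p) => M.mulVec β i) := by
  unfold Matrix.mulVec dotProduct
  exact continuous_finset_sum _ fun j _ => continuous_const.mul
    ((EuclideanSpace.proj j).continuous)

lemma ellLog_cont {n p : ℕ} (X : Matrix (Fin n) (Fin p) ℝ) (y : Fin n → ℝ) :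
    Continuous (fun β : EuclideanSpace ℝ (Fin p) => ellLog X y β) := by
  unfold ellLog
  apply continuous_finset_sum
  intro i _
  apply Continuous.sub
  · apply Continuous.log
    · exact continuous_const.add (Real.continuous_exp.comp (continuous_mulVec_coord X i))
    · intro β
      positivity
  · exact continuous_const.mul (continuous_mulVec_coord X i)

lemma ellLin_cont {n p : ℕ} (X : Matrix (Fin n) (Fin p) ℝ) (y : Fin n → ℝ) :
    Continuous (fun β : EuclideanSpace ℝ (Fin p) => ellLin X y β) := by
  unfold ellLin
  exact continuous_const.mul (continuous_finset_sum _ fun i _ =>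
    (continuous_const.sub (continuous_mulVec_coord X i)).pow 2)

lemma part1_comb {p₁ p₂ : ℕ} (a b : ℝ) (u v : EuclideanSpace ℝ (Fin (p₁ + p₂))) :
    part1 (a • u + b • v) = a • part1 u + b • part1 v := by
  ext j
  simp [part1, PiLp.add_apply, PiLp.smul_apply]

lemma part2_comb {p₁ p₂ : ℕ} (a b : ℝ) (u v : EuclideanSpace ℝ (Fin (p₁ + p₂))) :
    part2 (a • u + b • v) = a • part2 u + b • part2 v := by
  ext j
  simp [part2, PiLp.add_apply, PiLp.smul_apply]

lemma continuous_part1 {p₁ p₂ : ℕ} :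
    Continuous (part1 : EuclideanSpace ℝ (Fin (p₁ + p₂)) → EuclideanSpace ℝ (Fin p₁)) := by
  apply (PiLp.continuous_toLp 2 (fun _ : Fin p₁ => ℝ)).comp
  exact continuous_pi fun i => (EuclideanSpace.proj (Fin.castAdd p₂ i)).continuous

lemma continuous_part2 {p₁ p₂ : ℕ} :
    Continuous (part2 : EuclideanSpace ℝ (Fin (p₁ + p₂)) → EuclideanSpace ℝ (Fin p₂)) := by
  apply (PiLp.continuous_toLp 2 (fun _ : Fin p₂ => ℝ)).comp
  exact continuous_pi fun i => (EuclideanSpace.proj (Fin.natAdd p₁ i)).continuous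

end AUXLOSS
set_option maxHeartbeats 1000000 in
/-- for `ℓ ∈ {ℓ_log, ℓ_lin}`, if `[X Z]` is `(s₁+s₂)`-regular then:
(i) the SCL problem has a global minimizer; (ii) it has only finitely many local minimizers;
(iii) every local minimizer `β*` is strict: there are `δ > 0` and `l_f > 0` with
`f(β) ≥ f(β*) + (l_f/2)‖β − β*‖²` for all feasible `β` with `‖β − β*‖ < δ`; in particular
`β*` is the unique minimizer of `f` over the feasible set intersected with that neighborhood. -/
theorem scl_existence_finiteness_uniqueness {n p₁ p₂ : ℕ} (hn : 0 < n)
    (X : Matrix (Fin n) (Fin p₁) ℝ) (Z : Matrix (Fin n) (Fin p₂) ℝ) (y : Fin n → ℝ)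
    (s₁ s₂ : ℕ) (hs₁ : 0 < s₁) (hs₁p : s₁ < p₁) (hs₂ : 0 < s₂) (hs₂p : s₂ < p₂)
    (a b c : ℝ) (ha : 0 < a) (hb : 0 < b) (hc : 0 < c)
    (ℓ₁ : Matrix (Fin n) (Fin p₁) ℝ → (Fin n → ℝ) → EuclideanSpace ℝ (Fin p₁) → ℝ)
    (ℓ₂ : Matrix (Fin n) (Fin p₂) ℝ → (Fin n → ℝ) → EuclideanSpace ℝ (Fin p₂) → ℝ)
    (hℓ : (ℓ₁ = ellLog ∧ ℓ₂ = ellLog) ∨ (ℓ₁ = ellLin ∧ ℓ₂ = ellLin))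
    (f : EuclideanSpace ℝ (Fin (p₁ + p₂)) → ℝ)
    (hf : f = sclObj ℓ₁ ℓ₂ X Z y a b c)
    (hreg : sRegular (Matrix.of fun i => Fin.append (X i) (Z i)) (s₁ + s₂)) :
    (∃ βs ∈ feas p₁ p₂ s₁ s₂, ∀ β ∈ feas p₁ p₂ s₁ s₂, f βs ≤ f β) ∧
    {βs | βs ∈ feas p₁ p₂ s₁ s₂ ∧ IsLocalMinOn f (feas p₁ p₂ s₁ s₂) βs}.Finite ∧
    (∀ βs ∈ feas p₁ p₂ s₁ s₂, IsLocalMinOn f (feas p₁ p₂ s₁ s₂) βs →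
      ∃ δ > (0 : ℝ), ∃ lf > (0 : ℝ),
        (∀ β ∈ feas p₁ p₂ s₁ s₂, ‖β - βs‖ < δ →
          f βs + lf / 2 * ‖β - βs‖ ^ 2 ≤ f β) ∧
        (∀ β ∈ feas p₁ p₂ s₁ s₂, ‖β - βs‖ < δ → f β ≤ f βs → β = βs)) := by
  classical
  have hsle : s₁ + s₂ ≤ p₁ + p₂ := by omega
  have hn' : (0:ℝ) < (n:ℝ) := Nat.cast_pos.2 hn
  set g : EuclideanSpace ℝ (Fin (p₁ + p₂)) → ℝ :=
    fun β => (1 / (n:ℝ)) * (a * ℓ₁ X y (part1 β) + b * ℓ₂ Z y (part2 β)) with hgdef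
  set κ : ℝ := c / (2 * (n:ℝ)) with hκdef
  have hκ : 0 < κ := by rw [hκdef]; positivity
  have hfq : ∀ β, f β = g β + κ * ∑ i, (Wmap X Z β i) ^ 2 := by
    intro β
    rw [hf, hgdef, hκdef]
    unfold sclObj Wmap
    ring
  have hgconv : ∀ u v : EuclideanSpace ℝ (Fin (p₁ + p₂)), ∀ a' b' : ℝ,
      0 ≤ a' → 0 ≤ b' → a' + b' = 1 → g (a' • u + b' • v) ≤ a' * g u + b' * g v := by
    intro u v a' b' ha' hb' hab'
    have e1 : ℓ₁ X y (part1 (a' • u + b' • v))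
        ≤ a' * ℓ₁ X y (part1 u) + b' * ℓ₁ X y (part1 v) := by
      rw [part1_comb]
      rcases hℓ with ⟨h1, _⟩ | ⟨h1, _⟩ <;> rw [h1]
      · exact ellLog_convex_ineq X y _ _ _ _ ha' hb' hab'
      · exact ellLin_convex_ineq X y _ _ _ _ ha' hb' hab'
    have e2 : ℓ₂ Z y (part2 (a' • u + b' • v))
        ≤ a' * ℓ₂ Z y (part2 u) + b' * ℓ₂ Z y (part2 v) := by
      rw [part2_comb]
      rcases hℓ with ⟨_, h2⟩ | ⟨_, h2⟩ <;> rw [h2]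
      · exact ellLog_convex_ineq Z y _ _ _ _ ha' hb' hab'
      · exact ellLin_convex_ineq Z y _ _ _ _ ha' hb' hab'
    rw [hgdef]
    simp only
    have i1 := mul_le_mul_of_nonneg_left e1 ha.le
    have i2 := mul_le_mul_of_nonneg_left e2 hb.le
    have hinv : (0:ℝ) ≤ 1 / (n:ℝ) := by positivity
    nlinarith [mul_le_mul_of_nonneg_left (add_le_add i1 i2) hinv]
  have hgcont : Continuous g := by
    have c1 : Continuous (fun β : EuclideanSpace ℝ (Fin (p₁ + p₂)) => ℓ₁ X y (part1 β)) := by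
      rcases hℓ with ⟨h1, _⟩ | ⟨h1, _⟩ <;> rw [h1]
      · exact (ellLog_cont X y).comp continuous_part1
      · exact (ellLin_cont X y).comp continuous_part1
    have c2 : Continuous (fun β : EuclideanSpace ℝ (Fin (p₁ + p₂)) => ℓ₂ Z y (part2 β)) := by
      rcases hℓ with ⟨_, h2⟩ | ⟨_, h2⟩ <;> rw [h2]
      · exact (ellLog_cont Z y).comp continuous_part2
      · exact (ellLin_cont Z y).comp continuous_part2
    rw [hgdef]
    exact continuous_const.mul ((continuous_const.mul c1).add (continuous_const.mul c2))
  have hfc : Continuous f := by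
    have : f = fun β => g β + κ * ∑ i, (Wmap X Z β i) ^ 2 := funext hfq
    rw [this]
    exact hgcont.add (continuous_const.mul (continuous_Qmap X Z))
  have hSC : ∀ T : Finset (Fin (p₁ + p₂)), T.card ≤ s₁ + s₂ →
      ∃ m, 0 < m ∧ ∀ x ∈ Vset T, ∀ v ∈ Vset T, ∀ a' b' : ℝ, 0 ≤ a' → 0 ≤ b' → a' + b' = 1 →
        f (a' • x + b' • v) ≤ a' * f x + b' * f v - a' * b' * m * ‖x - v‖ ^ 2 := by
    intro T hT
    obtain ⟨m₀, hm₀, hbound⟩ := exists_modulus X Z hsle hreg T hT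
    refine ⟨κ * m₀, by positivity, ?_⟩
    intro x hx v hv a' b' ha' hb' hab'
    have := f_SC X Z g f κ hκ hfq hgconv T m₀ hbound x hx v hv a' b' ha' hb' hab'
    linarith [this]
  choose! mfun hm1 hm2 using hSC
  have hEX : ∀ T : Finset (Fin (p₁ + p₂)), T.card ≤ s₁ + s₂ →
      ∃ x, x ∈ Vset T ∧ ∀ v ∈ Vset T, f x ≤ f v := by
    intro T hT
    obtain ⟨x, hx1, hx2⟩ := exists_min_V f hfc T (mfun T) (hm1 T hT) (hm2 T hT)
    exact ⟨x, hx1, hx2⟩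
  choose! xfun hx1 hx2 using hEX
  refine ⟨?_, ?_, ?_⟩
  · -- (i) existence of a global minimizer
    set 𝒯 : Finset (Finset (Fin (p₁ + p₂))) :=
      Finset.univ.filter (fun T => okT p₁ p₂ s₁ s₂ T) with h𝒯
    have hne : 𝒯.Nonempty := ⟨∅, by simp [h𝒯, okT_empty]⟩
    obtain ⟨T₀, hT₀mem, hT₀min⟩ := 𝒯.exists_min_image (fun T => f (xfun T)) hne
    have okT₀ : okT p₁ p₂ s₁ s₂ T₀ := by
      rw [h𝒯] at hT₀mem
      exact (Finset.mem_filter.1 hT₀mem).2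
    have hcard₀ := card_le_of_okT okT₀
    refine ⟨xfun T₀, Vset_subset_feas okT₀ (hx1 T₀ hcard₀), ?_⟩
    intro β hβ
    have hok := (mem_feas_iff_okT β).1 hβ
    have hcard := card_le_of_okT hok
    have h1 : f (xfun T₀) ≤ f (xfun (suppF β)) :=
      hT₀min _ (by rw [h𝒯]; exact Finset.mem_filter.2 ⟨Finset.mem_univ _, hok⟩)
    have h2 : f (xfun (suppF β)) ≤ f β :=
      hx2 _ hcard β (mem_Vset_iff_suppF_subset.2 (subset_refl _))
    linarith
  · -- (ii) finitely many local minimizers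
    apply Set.Finite.of_finite_image (f := suppF) (Set.toFinite _)
    intro β hβ β' hβ' hTeq
    obtain ⟨hβf, hβloc⟩ := hβ
    obtain ⟨hβ'f, hβ'loc⟩ := hβ'
    set T := suppF β with hTdef
    have hok : okT p₁ p₂ s₁ s₂ T := (mem_feas_iff_okT β).1 hβf
    have hcard := card_le_of_okT hok
    have hVsub : Vset T ⊆ feas p₁ p₂ s₁ s₂ := Vset_subset_feas hok
    have hβV : β ∈ Vset T := mem_Vset_iff_suppF_subset.2 (subset_refl _)
    have hβ'V : β' ∈ Vset T := mem_Vset_iff_suppF_subset.2 (by rw [hTeq])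
    have g1 := growth f T (mfun T) (hm1 T hcard).le (hm2 T hcard) β hβV
      (hβloc.on_subset hVsub) β' hβ'V
    have g2 := growth f T (mfun T) (hm1 T hcard).le (hm2 T hcard) β' hβ'V
      (hβ'loc.on_subset hVsub) β hβV
    have hmpos := hm1 T hcard
    have hsq : ‖β - β'‖ ^ 2 ≤ 0 := by
      rw [show ‖β - β'‖ = ‖β' - β‖ from norm_sub_rev β β'] at g2 ⊢
      nlinarith [g1, g2, sq_nonneg ‖β' - β‖]
    have : ‖β - β'‖ = 0 := by nlinarith [sq_nonneg ‖β - β'‖, norm_nonneg (β - β')]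
    exact sub_eq_zero.1 (norm_eq_zero.1 this)
  · -- (iii) strict local minimizers
    intro βs hβsf hloc
    obtain ⟨δ, hδ0, hδ⟩ : ∃ δ > 0, ∀ i ∈ suppF βs, δ ≤ |βs i| := by
      by_cases hsupp : (suppF βs).Nonempty
      · obtain ⟨i₀, hi₀, hmin⟩ := Finset.exists_min_image (suppF βs) (fun i => |βs i|) hsupp
        exact ⟨|βs i₀|, abs_pos.2 (mem_suppF.1 hi₀), fun i hi => hmin i hi⟩
      · exact ⟨1, one_pos, fun i hi => absurd ⟨i, hi⟩ hsupp⟩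
    set 𝒯' : Finset (Finset (Fin (p₁ + p₂))) :=
      Finset.univ.filter (fun T : Finset (Fin (p₁ + p₂)) => T.card ≤ s₁ + s₂) with h𝒯'
    have hne' : 𝒯'.Nonempty := ⟨∅, by simp [h𝒯']⟩
    obtain ⟨Tm, hTmm, hTmmin⟩ := 𝒯'.exists_min_image mfun hne'
    have hTmcard : Tm.card ≤ s₁ + s₂ := by
      rw [h𝒯'] at hTmm
      exact (Finset.mem_filter.1 hTmm).2
    set lf := mfun Tm with hlfdef
    have hlf : 0 < lf := hm1 Tm hTmcard
    have hgrow : ∀ β ∈ feas p₁ p₂ s₁ s₂, ‖β - βs‖ < δ →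
        f βs + lf / 2 * ‖β - βs‖ ^ 2 ≤ f β := by
      intro β hβ hdist
      set T := suppF β with hTdef
      have hok : okT p₁ p₂ s₁ s₂ T := (mem_feas_iff_okT β).1 hβ
      have hcard := card_le_of_okT hok
      have hsub : suppF βs ⊆ suppF β := by
        intro i hi
        apply mem_suppF.2
        by_contra h0
        have hc : |βs i| ≤ ‖β - βs‖ := by
          have h1 : (β - βs) i = β i - βs i := by simp [PiLp.sub_apply]
          have h2 := euclid_coord_le_norm (β - βs) i
          rw [h1, h0] at h2
          simpa using h2
        have := hδ i hi
        linarith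
      have hβV : β ∈ Vset T := mem_Vset_iff_suppF_subset.2 (subset_refl _)
      have hβsV : βs ∈ Vset T := mem_Vset_iff_suppF_subset.2 hsub
      have hlocV : IsLocalMinOn f (Vset T) βs := hloc.on_subset (Vset_subset_feas hok)
      have hg := growth f T (mfun T) (hm1 T hcard).le (hm2 T hcard) βs hβsV hlocV β hβV
      have hle : lf ≤ mfun T := hTmmin T (by
        rw [h𝒯']
        exact Finset.mem_filter.2 ⟨Finset.mem_univ _, hcard⟩)
      nlinarith [hg, sq_nonneg ‖β - βs‖]
    refine ⟨δ, hδ0, lf, hlf, hgrow, ?_⟩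
    intro β hβ hdist hle
    have := hgrow β hβ hdist
    have hsq : ‖β - βs‖ ^ 2 ≤ 0 := by nlinarith
    have : ‖β - βs‖ = 0 := by nlinarith [sq_nonneg ‖β - βs‖, norm_nonneg (β - βs)]
    exact sub_eq_zero.1 (norm_eq_zero.1 this)
end

section
/- Let f : ℝ^m → ℝ be continuously differentiable and strongly smooth with parameter L_f > 0, let S ⊆ ℝ^m be nonempty and closed, let σ > 0 and 0 < α ≤ 1/(σ + L_f). Then for any β ∈ S and any β(α) ∈ argmin{‖u − (β − α∇f(β))‖ : u ∈ S}, it holds that f(β(α)) ≤ f(β) − (σ/2)‖β(α) − β‖². -/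
open Matrix Filter Topology Finset
open scoped RealInnerProductSpace

/-- if `f` is C¹ and strongly smooth with parameter `L_f > 0`, `S` is nonempty
closed, `σ > 0`, `0 < α ≤ 1/(σ + L_f)`, `β ∈ S` and `β(α)` is a Euclidean projection of
`β − α∇f(β)` onto `S`, then `f(β(α)) ≤ f(β) − (σ/2)‖β(α) − β‖²`. -/
theorem gradient_projection_sufficient_decrease {m : ℕ}
    (f : EuclideanSpace ℝ (Fin m) → ℝ) (hf : ContDiff ℝ 1 f)
    (Lf : ℝ) (hLf : 0 < Lf)
    (hsmooth : ∀ β d : EuclideanSpace ℝ (Fin m),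
      f (β + d) ≤ f β + ⟪gradient f β, d⟫ + Lf / 2 * ‖d‖ ^ 2)
    (S : Set (EuclideanSpace ℝ (Fin m))) (hne : S.Nonempty) (hcl : IsClosed S)
    (σ α : ℝ) (hσ : 0 < σ) (hα0 : 0 < α) (hα1 : α ≤ 1 / (σ + Lf))
    (β : EuclideanSpace ℝ (Fin m)) (hβ : β ∈ S)
    (βα : EuclideanSpace ℝ (Fin m)) (hβα : βα ∈ projSet S (β - α • gradient f β)) :
    f βα ≤ f β - σ / 2 * ‖βα - β‖ ^ 2 := by
  set g := gradient f β with hg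
  set d := βα - β with hd
  have hβα' := hβα.2 β hβ
  have hnorm : ‖d + α • g‖ ≤ ‖α • g‖ := by
    have h1 : βα - (β - α • g) = d + α • g := by rw [hd]; abel
    have h2 : β - (β - α • g) = α • g := by abel
    rw [h1, h2] at hβα'
    exact hβα'
  have hsq : ‖d + α • g‖ ^ 2 ≤ ‖α • g‖ ^ 2 :=
    pow_le_pow_left₀ (norm_nonneg _) hnorm 2
  have hexp : ‖d‖ ^ 2 + 2 * ⟪d, α • g⟫ ≤ 0 := by
    have := norm_add_sq_real d (α • g)
    nlinarith [this, hsq]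
  have hinner : ⟪d, α • g⟫ = α * ⟪g, d⟫ := by
    rw [real_inner_smul_right, real_inner_comm]
  have hgd : ⟪g, d⟫ ≤ -‖d‖ ^ 2 / (2 * α) := by
    rw [hinner] at hexp
    rw [le_div_iff₀ (by positivity : (0:ℝ) < 2 * α)]
    nlinarith
  have hkey := hsmooth β d
  have hβd : β + d = βα := by rw [hd]; abel
  rw [hβd] at hkey
  have hα' : σ + Lf ≤ 1 / α := by
    rw [le_div_iff₀ hα0]
    have hpos : 0 < σ + Lf := by linarith
    rw [le_div_iff₀ hpos] at hα1
    linarith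
  have h1α : σ / 2 + Lf / 2 ≤ 1 / (2 * α) := by
    have : 1 / (2 * α) = (1 / α) / 2 := by ring
    rw [this]
    linarith
  have hdn : (0:ℝ) ≤ ‖d‖ ^ 2 := by positivity
  have : ⟪g, d⟫ + Lf / 2 * ‖d‖ ^ 2 ≤ -(σ / 2) * ‖d‖ ^ 2 := by
    have h3 : (σ / 2 + Lf / 2) * (2 * α) ≤ 1 :=
      (le_div_iff₀ (by positivity : (0:ℝ) < 2 * α)).mp h1α
    have h2 : -‖d‖ ^ 2 / (2 * α) ≤ -(σ / 2 + Lf / 2) * ‖d‖ ^ 2 := by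
      rw [neg_div, neg_mul, neg_le_neg_iff, le_div_iff₀ (by positivity : (0:ℝ) < 2 * α)]
      nlinarith
    nlinarith
  linarith
end
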